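/- arXiv:1804.10407 — 5 statements merged into one kernel-verified Lean document; each statement's English description precedes it below -/
import Mathlib

section
/- Under the hypotheses of the previous statement (z ∈ Θ_A, i.e., ‖z‖ = 1, |⟨Az,z⟩| = r(A), and ⟨Ax,x⟩ = 0 where z = x + y, x ∈ range(A*), y ∈ ker(A)), it follows that ‖x‖ = ‖y‖ = 1/√2, ‖Ax‖ = ‖A‖·‖x‖, and |⟨Ax, y⟩| = ‖Ax‖·‖y‖. -/
open scoped InnerProductSpace

noncomputable def toCLM {n : ℕ} (A : Matrix (Fin n) (Fin n) ℂ) :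
    EuclideanSpace ℂ (Fin n) →L[ℂ] EuclideanSpace ℂ (Fin n) :=
  Matrix.toEuclideanCLM (𝕜 := ℂ) A

noncomputable def opNorm {n : ℕ} (A : Matrix (Fin n) (Fin n) ℂ) : ℝ := ‖toCLM A‖

noncomputable def numRadius {n : ℕ} (A : Matrix (Fin n) (Fin n) ℂ) : ℝ :=
  sSup {r : ℝ | ∃ z : EuclideanSpace ℂ (Fin n), ‖z‖ = 1 ∧ r = ‖⟪z, toCLM A z⟫_ℂ‖}

lemma bddS {n : ℕ} (A : Matrix (Fin n) (Fin n) ℂ) :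
    BddAbove {r : ℝ | ∃ z : EuclideanSpace ℂ (Fin n), ‖z‖ = 1 ∧ r = ‖⟪z, toCLM A z⟫_ℂ‖} := by
  refine ⟨‖toCLM A‖, ?_⟩
  rintro r ⟨w, hw, rfl⟩
  calc ‖⟪w, toCLM A w⟫_ℂ‖ = ‖⟪w, toCLM A w⟫_ℂ‖ := rfl
    _ ≤ ‖w‖ * ‖toCLM A w‖ := norm_inner_le_norm _ _
    _ ≤ ‖w‖ * (‖toCLM A‖ * ‖w‖) := by gcongr; exact (toCLM A).le_opNorm w
    _ = ‖toCLM A‖ := by rw [hw]; ring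

lemma numRadius_nonneg {n : ℕ} (A : Matrix (Fin n) (Fin n) ℂ) (hn : n ≠ 0) :
    0 ≤ numRadius A := by
  have h0 : (0:ℝ) ≤ ‖⟪(EuclideanSpace.single (⟨0, Nat.pos_of_ne_zero hn⟩ : Fin n) (1:ℂ) : EuclideanSpace ℂ (Fin n)), toCLM A (EuclideanSpace.single (⟨0, Nat.pos_of_ne_zero hn⟩ : Fin n) (1:ℂ))⟫_ℂ‖ := norm_nonneg _
  refine le_trans h0 (le_csSup (bddS A) ?_)
  exact ⟨_, by simp [EuclideanSpace.norm_single], rfl⟩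

lemma quad_le {n : ℕ} (A : Matrix (Fin n) (Fin n) ℂ) (hn : n ≠ 0)
    (w : EuclideanSpace ℂ (Fin n)) :
    ‖⟪w, toCLM A w⟫_ℂ‖ ≤ numRadius A * ‖w‖ ^ 2 := by
  have hr : 0 ≤ numRadius A := numRadius_nonneg A hn
  rcases eq_or_ne w 0 with rfl | hw
  · simp
  · have hnw : ‖w‖ ≠ 0 := norm_ne_zero_iff.mpr hw
    set u : EuclideanSpace ℂ (Fin n) := ((‖w‖⁻¹ : ℝ) : ℂ) • w with hu
    have hun : ‖u‖ = 1 := by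
      rw [hu, norm_smul]
      simp [abs_of_nonneg, hnw, norm_inv]
    have hle : ‖⟪u, toCLM A u⟫_ℂ‖ ≤ numRadius A :=
      le_csSup (bddS A) ⟨u, hun, rfl⟩
    have hval : ‖⟪u, toCLM A u⟫_ℂ‖ = ‖w‖⁻¹ ^ 2 * ‖⟪w, toCLM A w⟫_ℂ‖ := by
      rw [hu]
      simp [inner_smul_left, inner_smul_right, norm_mul, Complex.norm_real, abs_of_nonneg,
        inv_nonneg.mpr (norm_nonneg w)]
      ring
    rw [hval] at hle
    have h2 : (0:ℝ) < ‖w‖ ^ 2 := by positivity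
    calc ‖⟪w, toCLM A w⟫_ℂ‖ = (‖w‖⁻¹ ^ 2 * ‖⟪w, toCLM A w⟫_ℂ‖) * ‖w‖^2 := by
          field_simp
      _ ≤ numRadius A * ‖w‖ ^ 2 := by gcongr

lemma polar_le {n : ℕ} (A : Matrix (Fin n) (Fin n) ℂ) (hn : n ≠ 0)
    (u v : EuclideanSpace ℂ (Fin n)) (hu : ‖u‖ = 1) (hv : ‖v‖ = 1) :
    ‖⟪u, toCLM A v⟫_ℂ‖ ≤ 2 * numRadius A := by
  set T := toCLM A with hT
  have key : ∀ p q : EuclideanSpace ℂ (Fin n),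
      ⟪p + q, T (p + q)⟫_ℂ - ⟪p - q, T (p - q)⟫_ℂ = 2 * ⟪p, T q⟫_ℂ + 2 * ⟪q, T p⟫_ℂ := by
    intro p q
    simp only [map_add, map_sub, inner_add_left, inner_add_right, inner_sub_left, inner_sub_right]
    ring
  set w : EuclideanSpace ℂ (Fin n) := Complex.I • u with hwdef
  have hwn : ‖w‖ = 1 := by rw [hwdef, norm_smul]; simp [hu]
  have h4 : (4:ℂ) * ⟪u, T v⟫_ℂ =
      (⟪u + v, T (u + v)⟫_ℂ - ⟪u - v, T (u - v)⟫_ℂ)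
      + Complex.I * (⟪w + v, T (w + v)⟫_ℂ - ⟪w - v, T (w - v)⟫_ℂ) := by
    rw [key, key, hwdef]
    simp only [inner_smul_left, map_smul, inner_smul_right, Complex.conj_I, smul_eq_mul]
    ring_nf
    simp [Complex.I_sq]
    ring
  have habs : ‖(4:ℂ) * ⟪u, T v⟫_ℂ‖ ≤
      ‖⟪u + v, T (u + v)⟫_ℂ‖ + ‖⟪u - v, T (u - v)⟫_ℂ‖
      + (‖⟪w + v, T (w + v)⟫_ℂ‖ + ‖⟪w - v, T (w - v)⟫_ℂ‖) := by
    rw [h4]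
    refine le_trans (norm_add_le _ _) ?_
    gcongr
    · exact norm_sub_le _ _
    · rw [norm_mul, Complex.norm_I, one_mul]
      exact norm_sub_le _ _
  have p1 := parallelogram_law_with_norm ℂ u v
  have p2 := parallelogram_law_with_norm ℂ w v
  have q1 := quad_le A hn (u + v)
  have q2 := quad_le A hn (u - v)
  have q3 := quad_le A hn (w + v)
  have q4 := quad_le A hn (w - v)
  have h4' : ‖(4:ℂ) * ⟪u, T v⟫_ℂ‖ = 4 * ‖⟪u, T v⟫_ℂ‖ := by
    rw [norm_mul]; norm_num
  rw [h4'] at habs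
  have hr := numRadius_nonneg A hn
  have e1 : ‖u + v‖ ^ 2 = ‖u + v‖ * ‖u + v‖ := pow_two _
  have e2 : ‖u - v‖ ^ 2 = ‖u - v‖ * ‖u - v‖ := pow_two _
  have e3 : ‖w + v‖ ^ 2 = ‖w + v‖ * ‖w + v‖ := pow_two _
  have e4 : ‖w - v‖ ^ 2 = ‖w - v‖ * ‖w - v‖ := pow_two _
  rw [e1] at q1; rw [e2] at q2; rw [e3] at q3; rw [e4] at q4
  rw [hu, hv] at p1; rw [hwn, hv] at p2
  nlinarith [q1, q2, q3, q4, p1, p2, habs]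

lemma opNorm_le_two_numRadius {n : ℕ} (A : Matrix (Fin n) (Fin n) ℂ) (hn : n ≠ 0) :
    ‖toCLM A‖ ≤ 2 * numRadius A := by
  have hr := numRadius_nonneg A hn
  refine (toCLM A).opNorm_le_bound (by linarith) ?_
  intro v
  rcases eq_or_ne (toCLM A v) 0 with h0 | hTv
  · rw [h0, norm_zero]; positivity
  have hv : v ≠ 0 := by rintro rfl; simp at hTv
  have hnv : ‖v‖ ≠ 0 := norm_ne_zero_iff.mpr hv
  have hnTv : ‖toCLM A v‖ ≠ 0 := norm_ne_zero_iff.mpr hTv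
  set u : EuclideanSpace ℂ (Fin n) := ((‖toCLM A v‖⁻¹ : ℝ) : ℂ) • toCLM A v with hudef
  set v' : EuclideanSpace ℂ (Fin n) := ((‖v‖⁻¹ : ℝ) : ℂ) • v with hvdef
  have hun : ‖u‖ = 1 := by
    rw [hudef, norm_smul]; simp [hnTv]
  have hvn : ‖v'‖ = 1 := by
    rw [hvdef, norm_smul]; simp [hnv]
  have h := polar_le A hn u v' hun hvn
  have hval : ‖⟪u, toCLM A v'⟫_ℂ‖ = ‖toCLM A v‖ * ‖v‖⁻¹ := by
    rw [hudef, hvdef]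
    have hself : ‖⟪toCLM A v, toCLM A v⟫_ℂ‖ = ‖toCLM A v‖ * ‖toCLM A v‖ := by
      rw [← inner_self_re_eq_norm, inner_self_eq_norm_mul_norm]
    rw [map_smul, inner_smul_left, inner_smul_right]
    simp only [norm_mul, Complex.norm_real, RCLike.star_def, Complex.conj_ofReal, hself]
    rw [Real.norm_of_nonneg (by positivity : (0:ℝ) ≤ ‖toCLM A v‖⁻¹),
      Real.norm_of_nonneg (by positivity : (0:ℝ) ≤ ‖v‖⁻¹)]
    field_simp
  rw [hval] at h
  have hvpos : 0 < ‖v‖ := lt_of_le_of_ne (norm_nonneg _) (Ne.symm hnv)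
  calc ‖toCLM A v‖ = (‖toCLM A v‖ * ‖v‖⁻¹) * ‖v‖ := by field_simp
    _ ≤ (2 * numRadius A) * ‖v‖ := by gcongr

set_option maxHeartbeats 1000000 in
theorem stmt4 {n : ℕ} (A : Matrix (Fin n) (Fin n) ℂ) (hA : A ≠ 0)
    (z x y : EuclideanSpace ℂ (Fin n)) (hz : ‖z‖ = 1) (hdec : z = x + y)
    (hx : x ∈ LinearMap.range (ContinuousLinearMap.adjoint (toCLM A) : EuclideanSpace ℂ (Fin n) →ₗ[ℂ] EuclideanSpace ℂ (Fin n)))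
    (hy : toCLM A y = 0)
    (hmax : ‖⟪z, toCLM A z⟫_ℂ‖ = numRadius A)
    (hxx : ⟪x, toCLM A x⟫_ℂ = 0) :
    ‖x‖ = (Real.sqrt 2)⁻¹ ∧ ‖y‖ = (Real.sqrt 2)⁻¹ ∧
      ‖toCLM A x‖ = opNorm A * ‖x‖ ∧
      ‖⟪y, toCLM A x⟫_ℂ‖ = ‖toCLM A x‖ * ‖y‖ := by
  have hn : n ≠ 0 := by
    rintro rfl
    exact hA (Subsingleton.elim A 0)
  have hxy : ⟪x, y⟫_ℂ = 0 := by
    obtain ⟨w, hw⟩ := hx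
    rw [← hw, ContinuousLinearMap.coe_coe, ContinuousLinearMap.adjoint_inner_left, hy, inner_zero_right]
  have hpyth : ‖x‖ ^ 2 + ‖y‖ ^ 2 = 1 := by
    have := norm_add_sq (𝕜 := ℂ) x y
    rw [← hdec, hz, hxy] at this
    simp at this
    linarith
  have hzAz : ⟪z, toCLM A z⟫_ℂ = ⟪y, toCLM A x⟫_ℂ := by
    rw [hdec, map_add, hy, add_zero, inner_add_left, hxx, zero_add]
  set T := toCLM A with hT
  set a := ‖x‖ with ha
  set b := ‖y‖ with hb
  set r := numRadius A with hrdef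
  set N := ‖T‖ with hN
  have hr_eq : r = ‖⟪y, T x⟫_ℂ‖ := by rw [← hmax, hzAz]
  have hTne : T ≠ 0 := by
    intro h
    apply hA
    apply EquivLike.injective (Matrix.toEuclideanCLM (𝕜 := ℂ))
    rw [map_zero]
    exact h
  have hNpos : 0 < N := by
    rcases lt_or_eq_of_le (norm_nonneg T) with h | h
    · exact h
    · exact absurd ((toCLM A).opNorm_zero_iff.mp h.symm) hTne
  have ha0 : 0 ≤ a := norm_nonneg _
  have hb0 : 0 ≤ b := norm_nonneg _
  have c1 : r ≤ ‖T x‖ * b := by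
    rw [hr_eq]
    calc ‖⟪y, T x⟫_ℂ‖ = ‖⟪y, T x⟫_ℂ‖ := rfl
      _ ≤ b * ‖T x‖ := norm_inner_le_norm _ _
      _ = ‖T x‖ * b := mul_comm _ _
  have c2 : ‖T x‖ * b ≤ N * (a * b) := by
    have := T.le_opNorm x
    nlinarith
  have c3 : N * (a * b) ≤ N * (1 / 2) := by
    have : a * b ≤ 1 / 2 := by nlinarith [sq_nonneg (a - b)]
    nlinarith
  have c4 : N ≤ 2 * r := opNorm_le_two_numRadius A hn
  have hE1 : ‖⟪y, T x⟫_ℂ‖ = ‖T x‖ * b := by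
    rw [← hr_eq]; exact le_antisymm c1 (by linarith)
  have hE2 : ‖T x‖ * b = N * (a * b) := le_antisymm c2 (by linarith)
  have hE3 : N * (a * b) = N * (1 / 2) := le_antisymm c3 (by linarith)
  have hab : a * b = 1 / 2 := mul_left_cancel₀ (ne_of_gt hNpos) hE3
  have haeqb : a = b := by nlinarith [sq_nonneg (a - b)]
  have ha2 : a ^ 2 = 1 / 2 := by nlinarith
  have hspos : 0 < Real.sqrt 2 := Real.sqrt_pos.mpr (by norm_num)
  have hs2 : Real.sqrt 2 ^ 2 = 2 := Real.sq_sqrt (by norm_num)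
  have haval : a = (Real.sqrt 2)⁻¹ := by
    have hc2 : ((Real.sqrt 2)⁻¹) ^ 2 = 1 / 2 := by
      rw [inv_pow, hs2]; norm_num
    have hcpos : 0 < (Real.sqrt 2)⁻¹ := inv_pos.mpr hspos
    have hfac : (a - (Real.sqrt 2)⁻¹) * (a + (Real.sqrt 2)⁻¹) = 0 := by nlinarith
    rcases mul_eq_zero.mp hfac with h | h
    · linarith
    · linarith
  have hbval : b = (Real.sqrt 2)⁻¹ := haeqb ▸ haval
  have hbne : b ≠ 0 := by rw [hbval]; positivity
  have hTx : ‖T x‖ = N * a := by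
    have : ‖T x‖ * b = (N * a) * b := by rw [hE2]; ring
    exact mul_right_cancel₀ hbne this
  exact ⟨haval, hbval, hTx, hE1⟩
end

section
/- Suppose A ∈ ℂ^{n×n} is half-radial, v ∈ V_max(A) is a unit vector, u = Av/‖A‖, and α, β ∈ ℝ. Then the unit vector z̃ = (e^{iα}v + e^{iβ}u)/√2 satisfies |⟨Az̃, z̃⟩| = r(A), and the component of z̃ in range(A*) is e^{iα}v/√2 which satisfies ⟨A(e^{iα}v), e^{iα}v⟩ = 0. -/
open scoped InnerProductSpace

section Helpers
open Complex ContinuousLinearMap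

lemma quadAux (A B : ℝ) (hA : 0 ≤ A) (h : ∀ t : ℝ, 0 ≤ A*t^2 + B*t) : B = 0 := by
  have h1 := h (-(B)/(A+1))
  have h2 : (A:ℝ) + 1 ≠ 0 := by positivity
  have e : (A+1)^2 * (A*(-(B)/(A+1))^2 + B*(-(B)/(A+1))) = -B^2 := by
    field_simp
    ring
  have h3 := mul_nonneg (sq_nonneg (A+1)) h1
  rw [e] at h3
  nlinarith [sq_nonneg B]

variable {E : Type*} [NormedAddCommGroup E] [InnerProductSpace ℂ E]

lemma nradScale (T : E →L[ℂ] E) (r : ℝ) (hr : 0 ≤ r)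
    (h : ∀ x : E, ‖x‖ = 1 → ‖⟪x, T x⟫_ℂ‖ ≤ r) :
    ∀ x : E, ‖⟪x, T x⟫_ℂ‖ ≤ r * ‖x‖^2 := by
  intro x
  rcases eq_or_ne x 0 with rfl | hx
  · simp
  · have hnx : ‖x‖ ≠ 0 := norm_ne_zero_iff.2 hx
    have h1 : ‖(‖x‖⁻¹ : ℂ) • x‖ = 1 := by
      simp [norm_smul, inv_mul_cancel₀ hnx]
    have h2 := h _ h1
    rw [map_smul, inner_smul_left, inner_smul_right] at h2
    simp only [map_mul, norm_mul, Complex.norm_conj, norm_inv, map_inv₀, Complex.norm_real, Real.norm_eq_abs,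
      _root_.abs_of_nonneg (norm_nonneg x)] at h2
    have h5 := mul_le_mul_of_nonneg_left h2 (by positivity : (0:ℝ) ≤ ‖x‖^2)
    calc ‖⟪x, T x⟫_ℂ‖ = ‖x‖^2 * (‖x‖⁻¹ * (‖x‖⁻¹ * ‖⟪x, T x⟫_ℂ‖)) := by
          field_simp
      _ ≤ ‖x‖^2 * r := h5
      _ = r * ‖x‖^2 := by ring

lemma absUnit (c : ℂ) (hc : ‖c‖ = 1) : (starRingEnd ℂ) c * c = 1 := by
  rw [mul_comm, Complex.mul_conj]
  norm_cast
  rw [Complex.normSq_eq_norm_sq, hc]; norm_num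


lemma phaseAux (w : ℂ) (φ : ℝ) :
    Complex.exp (↑(φ - w.arg) * I) * w = (‖w‖ : ℂ) * Complex.exp (↑φ * I) := by
  have h := Complex.norm_mul_exp_arg_mul_I w
  rw [Complex.ofReal_sub, sub_mul, Complex.exp_sub]
  field_simp [Complex.exp_ne_zero]
  have h' : Complex.exp (I * ↑w.arg) = Complex.exp (↑w.arg * I) := by rw [mul_comm]
  linear_combination -h - (‖w‖:ℂ) * h'


lemma stepOne (N : ℝ) (hNpos : 0 < N) (a b d : ℂ)
    (hP : ∀ c : ℂ, ‖c‖ = 1 →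
      ‖(a + d + (c*b + (starRingEnd ℂ) c * N))‖ ≤ N + (c*a).re) :
    b = 0 ∧ a = 0 ∧ d = 0 := by
  have hgc : ∀ c : ℂ, ‖c‖ = 1 → ‖(c*b + (starRingEnd ℂ) c * N)‖ ≤ N := by
    intro c hc
    have h1 := hP c hc
    have h2 := hP (-c) (by rw [norm_neg]; exact hc)
    rw [show (-c)*b + (starRingEnd ℂ) (-c) * N = -(c*b + (starRingEnd ℂ) c * N) by
      rw [map_neg]; ring] at h2
    rw [show ((-c)*a).re = -((c*a).re) by rw [neg_mul, Complex.neg_re]] at h2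
    set g := c*b + (starRingEnd ℂ) c * N with hg
    have key : ‖(2*g)‖ ≤ 2*N := by
      calc ‖(2*g)‖ = ‖((a+d+g) - (a+d+ -g))‖ := by congr 1; ring
        _ ≤ ‖(a+d+g)‖ + ‖(a+d+ -g)‖ := by
            rw [sub_eq_add_neg]
            calc _ ≤ ‖(a+d+g)‖ + ‖(-(a+d+ -g))‖ := norm_add_le _ _
              _ = _ := by rw [norm_neg]
        _ ≤ (N + (c*a).re) + (N + -(c*a).re) := add_le_add h1 h2
        _ = 2*N := by ring
    rw [norm_mul, Complex.norm_two] at key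
    linarith
  have hb0 : b = 0 := by
    set c : ℂ := Complex.exp (↑(-(b.arg/2)) * I) with hcdef
    have hc : ‖c‖ = 1 := Complex.norm_exp_ofReal_mul_I _
    have hconj : (starRingEnd ℂ) c = Complex.exp (↑(b.arg/2) * I) := by
      rw [hcdef, ← Complex.exp_conj, map_mul, Complex.conj_ofReal, Complex.conj_I]
      push_cast
      ring_nf
    have hcb : c * b = (‖b‖ : ℂ) * (starRingEnd ℂ) c := by
      rw [hconj, hcdef, show (-(b.arg/2)) = b.arg/2 - b.arg by ring, phaseAux]
    have hfin := hgc c hc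
    rw [hcb, ← mul_comm ((starRingEnd ℂ) c), ← mul_add, norm_mul, Complex.norm_conj, hc,
      one_mul] at hfin
    rw [show ((‖b‖ : ℂ) + (N:ℂ)) = ((‖b‖ + N : ℝ) : ℂ) by push_cast; ring,
      Complex.norm_real, Real.norm_eq_abs, _root_.abs_of_nonneg (by positivity : (0:ℝ) ≤ ‖b‖ + N)] at hfin
    have : ‖b‖ ≤ 0 := by linarith
    exact norm_eq_zero.mp (le_antisymm this (norm_nonneg b))
  -- step 2
  have hXre : ∀ c : ℂ, ‖c‖ = 1 →
      ‖(a + d + (starRingEnd ℂ) c * N)‖ ≤ N + (c*a).re := by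
    intro c hc
    have := hP c hc
    rwa [hb0, mul_zero, zero_add] at this
  have hsq : ∀ c : ℂ, ‖c‖ = 1 → ‖(a + d)‖^2 ≤ (c*a).re^2 := by
    intro c hc
    have h1 := hXre c hc
    have h2 := hXre (-c) (by rw [norm_neg]; exact hc)
    rw [show (starRingEnd ℂ) (-c) * N = -((starRingEnd ℂ) c * N) by rw [map_neg]; ring] at h2
    rw [show ((-c)*a).re = -((c*a).re) by rw [neg_mul, Complex.neg_re]] at h2
    have hnn1 : (0:ℝ) ≤ N + (c*a).re := le_trans (norm_nonneg _) h1
    have hnn2 : (0:ℝ) ≤ N + -(c*a).re := le_trans (norm_nonneg _) h2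
    have hs1 : ‖(a + d + (starRingEnd ℂ) c * N)‖^2 ≤ (N + (c*a).re)^2 := by
      nlinarith [norm_nonneg (a + d + (starRingEnd ℂ) c * N)]
    have hs2 : ‖(a + d + -((starRingEnd ℂ) c * N))‖^2 ≤ (N + -(c*a).re)^2 := by
      nlinarith [norm_nonneg (a + d + -((starRingEnd ℂ) c * N))]
    have hpar : ‖(a + d + (starRingEnd ℂ) c * N)‖^2
        + ‖(a + d + -((starRingEnd ℂ) c * N))‖^2
        = 2 * ‖(a+d)‖^2 + 2 * N^2 := by
      rw [Complex.sq_norm, Complex.sq_norm, Complex.sq_norm, ← sub_eq_add_neg,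
        Complex.normSq_add, Complex.normSq_sub]
      have : Complex.normSq ((starRingEnd ℂ) c * N) = N^2 := by
        rw [map_mul, Complex.normSq_conj]
        rw [show Complex.normSq c = 1 by rw [Complex.normSq_eq_norm_sq, hc]; norm_num]
        simp [Complex.normSq_ofReal]
        ring
      rw [this]; ring
    nlinarith
  have hX0 : a + d = 0 := by
    set c : ℂ := Complex.exp (↑(Real.pi/2 - a.arg) * I) with hcdef
    have hc : ‖c‖ = 1 := Complex.norm_exp_ofReal_mul_I _
    have hca : c * a = (‖a‖ : ℂ) * Complex.exp (↑(Real.pi/2) * I) := phaseAux a _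
    have hre : (c*a).re = 0 := by
      rw [hca, show Complex.exp (↑(Real.pi/2) * I) = I by
        rw [Complex.exp_mul_I, ← Complex.ofReal_cos, ← Complex.ofReal_sin,
          Real.cos_pi_div_two, Real.sin_pi_div_two]
        simp]
      simp
    have := hsq c hc
    rw [hre] at this
    have h0 : ‖(a+d)‖ = 0 := by
      nlinarith [norm_nonneg (a+d)]
    exact norm_eq_zero.mp h0
  have ha0 : a = 0 := by
    set c : ℂ := Complex.exp (↑(Real.pi - a.arg) * I) with hcdef
    have hc : ‖c‖ = 1 := Complex.norm_exp_ofReal_mul_I _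
    have hca : c * a = (‖a‖ : ℂ) * Complex.exp (↑Real.pi * I) := phaseAux a _
    have hre : (c*a).re = -(‖a‖) := by
      rw [hca, Complex.exp_pi_mul_I]
      simp
    have h1 := hXre c hc
    rw [hX0, zero_add, norm_mul, Complex.norm_conj, hc, one_mul, Complex.norm_real, Real.norm_eq_abs,
      abs_of_pos hNpos, hre] at h1
    have : ‖a‖ ≤ 0 := by linarith
    exact norm_eq_zero.mp (le_antisymm this (norm_nonneg a))
  have hd0 : d = 0 := by have := hX0; rw [ha0, zero_add] at this; exact this
  exact ⟨hb0, ha0, hd0⟩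



lemma adjTv [CompleteSpace E] (T : E →L[ℂ] E) (N : ℝ)
    (hTN : ‖T‖ = N) (hNpos : 0 < N)
    (v : E) (hv : ‖v‖ = 1) (hTvn : ‖T v‖ = N) :
    adjoint T (T v) = ((N:ℂ)^2) • v := by
  set S := adjoint T with hS
  have hSnorm : ‖S‖ = N := by rw [hS, LinearIsometryEquiv.norm_map adjoint T]; exact hTN
  have key : ‖S (T v) - ((N:ℂ)^2) • v‖^2 ≤ 0 := by
    have e1 : ‖S (T v) - ((N:ℂ)^2) • v‖^2
        = ‖S (T v)‖^2 - 2 * Complex.re ⟪S (T v), ((N:ℂ)^2) • v⟫_ℂ + ‖((N:ℂ)^2) • v‖^2 :=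
      @norm_sub_sq ℂ _ _ _ _ _ _
    have e2 : ⟪S (T v), ((N:ℂ)^2) • v⟫_ℂ = ((N:ℂ)^2) * ⟪T v, T v⟫_ℂ := by
      rw [inner_smul_right, hS, adjoint_inner_left]
    have e3 : ⟪T v, T v⟫_ℂ = ((N:ℂ))^2 := by
      rw [inner_self_eq_norm_sq_to_K, hTvn]
      norm_cast
    have e4 : Complex.re (((N:ℂ)^2) * ((N:ℂ))^2) = N^4 := by
      rw [← Complex.ofReal_pow, ← Complex.ofReal_mul, Complex.ofReal_re]
      ring
    have e5 : ‖((N:ℂ)^2) • v‖ = N^2 := by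
      rw [norm_smul, hv, mul_one]
      simp [norm_pow, Complex.norm_real, Real.norm_eq_abs, abs_of_pos hNpos]
    have e6 : ‖S (T v)‖ ≤ N^2 := by
      calc ‖S (T v)‖ ≤ ‖S‖ * ‖T v‖ := S.le_opNorm _
        _ = N^2 := by rw [hSnorm, hTvn]; ring
    have e7 : ‖S (T v)‖^2 ≤ N^4 := by nlinarith [norm_nonneg (S (T v))]
    rw [e1, e2, e3, e4, e5]
    nlinarith
  have : S (T v) - ((N:ℂ)^2) • v = 0 := by
    have h0 : ‖S (T v) - ((N:ℂ)^2) • v‖ = 0 := by nlinarith [norm_nonneg (S (T v) - ((N:ℂ)^2) • v), sq_nonneg ‖S (T v) - ((N:ℂ)^2) • v‖]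
    exact norm_eq_zero.mp h0
  linear_combination (norm := module) this



lemma ineqP (T : E →L[ℂ] E) (N r : ℝ) (hNpos : 0 < N) (hNr : N = 2*r)
    (hq : ∀ x : E, ‖⟪x, T x⟫_ℂ‖ ≤ r * ‖x‖^2)
    (v u : E) (hv : ‖v‖ = 1) (hu1 : ‖u‖ = 1)
    (a b d : ℂ) (ha : a = ⟪v, T v⟫_ℂ) (hb : b = ⟪v, T u⟫_ℂ) (hd : d = ⟪u, T u⟫_ℂ)
    (hvu : ⟪v, u⟫_ℂ = (N:ℂ)⁻¹ * a) (huu : ⟪u, u⟫_ℂ = 1) (huTv : ⟪u, T v⟫_ℂ = (N:ℂ))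
    (c : ℂ) (hc : ‖c‖ = 1) :
    ‖(a + d + (c*b + (starRingEnd ℂ) c * N))‖ ≤ N + (c*a).re := by
  set w := v + c • u with hw
  have hcc : (starRingEnd ℂ) c * c = 1 := by
    rw [mul_comm, Complex.mul_conj]
    norm_cast
    rw [Complex.normSq_eq_norm_sq, hc]; norm_num
  have hiw : ⟪w, T w⟫_ℂ = a + d + (c*b + (starRingEnd ℂ) c * N) := by
    rw [hw, map_add, map_smul]
    simp only [inner_add_left, inner_add_right, inner_smul_left, inner_smul_right,
      ← ha, ← hb, ← hd, huTv, ContinuousLinearMap.coe_smul', Pi.smul_apply]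
    linear_combination d * hcc
  have hnw : ‖w‖^2 = 2 + 2 * (c*a).re / N := by
    have e1 : ‖w‖^2 = ‖v‖^2 + 2 * Complex.re ⟪v, c • u⟫_ℂ + ‖c • u‖^2 := @norm_add_sq ℂ _ _ _ _ _ _
    have e2 : ⟪v, c • u⟫_ℂ = (N:ℂ)⁻¹ * (c * a) := by rw [inner_smul_right, hvu]; ring
    have e3 : ‖c • u‖ = 1 := by
      rw [norm_smul, hu1, mul_one, hc]
    rw [e1, e2, e3, hv, show ((N:ℂ))⁻¹ = ((N⁻¹:ℝ):ℂ) by push_cast; ring,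
      Complex.re_ofReal_mul]
    field_simp
    ring
  have := hq w
  rw [hiw, hnw] at this
  have hN' : N ≠ 0 := hNpos.ne'
  have hr0 : r ≠ 0 := by intro h0; rw [h0] at hNr; simp at hNr; linarith
  calc ‖(a + d + (c*b + (starRingEnd ℂ) c * N))‖ ≤ r * (2 + 2*(c*a).re/N) := this
    _ = N + (c*a).re := by rw [hNr]; field_simp





lemma stepTwo [CompleteSpace E] (T : E →L[ℂ] E) (N r : ℝ) (hNpos : 0 < N) (hNr : N = 2*r)
    (hq : ∀ x : E, ‖⟪x, T x⟫_ℂ‖ ≤ r * ‖x‖^2)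
    (v u : E) (hv : ‖v‖ = 1) (hu1 : ‖u‖ = 1)
    (huu : ⟪u, u⟫_ℂ = 1) (hvv : ⟪v, v⟫_ℂ = 1)
    (ha0 : ⟪v, T v⟫_ℂ = 0) (hb0 : ⟪v, T u⟫_ℂ = 0) (hd0 : ⟪u, T u⟫_ℂ = 0)
    (hvu0 : ⟪v, u⟫_ℂ = 0) (huTv : ⟪u, T v⟫_ℂ = (N:ℂ))
    (hTv : T v = (N:ℂ) • u) (hSu : adjoint T u = (N:ℂ) • v)
    (c : ℂ) (hc : ‖c‖ = 1) :
    (c^2) • T u + ((starRingEnd ℂ) c) • adjoint T v = (0:E) := by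
  set S := adjoint T with hSdef
  have hcc : (starRingEnd ℂ) c * c = 1 := absUnit c hc
  have hNrC : (N:ℂ) = 2*(r:ℂ) := by exact_mod_cast hNr
  set w := v + c • u with hw
  set Tc : E →L[ℂ] E :=
    (r:ℂ) • ContinuousLinearMap.id ℂ E - ((2:ℂ)⁻¹ * c) • T - ((2:ℂ)⁻¹ * (starRingEnd ℂ) c) • S
    with hTcDef
  have hTcApply : ∀ x : E, Tc x
      = (r:ℂ) • x - ((2:ℂ)⁻¹ * c) • T x - ((2:ℂ)⁻¹ * (starRingEnd ℂ) c) • S x := by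
    intro x
    simp [hTcDef]
  have hinner : ∀ x y : E, ⟪x, Tc y⟫_ℂ
      = (r:ℂ) * ⟪x, y⟫_ℂ - ((2:ℂ)⁻¹ * c) * ⟪x, T y⟫_ℂ
        - ((2:ℂ)⁻¹ * (starRingEnd ℂ) c) * ⟪T x, y⟫_ℂ := by
    intro x y
    rw [hTcApply, inner_sub_right, inner_sub_right, inner_smul_right, inner_smul_right,
      inner_smul_right, hSdef, adjoint_inner_right]
  have hsym : ∀ x y : E, ⟪x, Tc y⟫_ℂ = (starRingEnd ℂ) ⟪y, Tc x⟫_ℂ := by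
    intro x y
    rw [hinner, hinner]
    simp only [map_sub, map_mul, inner_conj_symm, Complex.conj_conj, Complex.conj_ofReal,
      map_inv₀, map_ofNat]
    ring
  have hQ : ∀ x : E, 0 ≤ (⟪x, Tc x⟫_ℂ).re := by
    intro x
    have h2 : ⟪T x, x⟫_ℂ = (starRingEnd ℂ) ⟪x, T x⟫_ℂ := (inner_conj_symm _ _).symm
    have e : ⟪x, Tc x⟫_ℂ = ((r * ‖x‖^2 - (c * ⟪x, T x⟫_ℂ).re : ℝ) : ℂ) := by
      have hxx : ⟪x, x⟫_ℂ = ((‖x‖^2 : ℝ) : ℂ) := by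
        rw [inner_self_eq_norm_sq_to_K]; norm_cast
      rw [hinner, hxx, h2]
      have hac : c * ⟪x, T x⟫_ℂ + (starRingEnd ℂ) (c * ⟪x, T x⟫_ℂ)
          = ((2 * (c * ⟪x, T x⟫_ℂ).re : ℝ) : ℂ) := Complex.add_conj _
      have hmul : (starRingEnd ℂ) c * (starRingEnd ℂ) ⟪x, T x⟫_ℂ
          = (starRingEnd ℂ) (c * ⟪x, T x⟫_ℂ) := (map_mul _ _ _).symm
      push_cast at hac ⊢
      linear_combination (-(2:ℂ)⁻¹) * hac + (-(2:ℂ)⁻¹) * hmul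
    rw [e, Complex.ofReal_re]
    have h3 : (c * ⟪x, T x⟫_ℂ).re ≤ r * ‖x‖^2 := by
      calc (c * ⟪x, T x⟫_ℂ).re ≤ ‖(c * ⟪x, T x⟫_ℂ)‖ := Complex.re_le_norm _
        _ = ‖⟪x, T x⟫_ℂ‖ := by rw [norm_mul, hc, one_mul]
        _ ≤ r * ‖x‖^2 := hq x
    linarith
  have hwTw : ⟪w, T w⟫_ℂ = (starRingEnd ℂ) c * N := by
    rw [hw, map_add, map_smul]
    simp only [inner_add_left, inner_add_right, inner_smul_left, inner_smul_right,
      ContinuousLinearMap.coe_smul', Pi.smul_apply, ha0, hb0, hd0, huTv]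
    ring
  have hww : ⟪w, w⟫_ℂ = 2 := by
    rw [hw]
    simp only [inner_add_left, inner_add_right, inner_smul_left, inner_smul_right,
      hvv, huu, hvu0]
    have : ⟪u, v⟫_ℂ = 0 := by rw [← inner_conj_symm, hvu0, map_zero]
    rw [this]
    linear_combination hcc
  have hTww : ⟪T w, w⟫_ℂ = c * N := by
    rw [← inner_conj_symm, hwTw, map_mul, Complex.conj_conj, Complex.conj_ofReal]
  have hQw : ⟪w, Tc w⟫_ℂ = 0 := by
    have hcc' : c * (starRingEnd ℂ) c = 1 := by rw [mul_comm]; exact hcc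
    rw [hinner, hww, hwTw, hTww, hNrC]
    linear_combination (-(2:ℂ))*(r:ℂ)*hcc'
  set m := Tc w with hm
  have hmzero : m = 0 := by
    have hexp : ∀ t : ℝ, 0 ≤ (⟪m, Tc m⟫_ℂ).re * t^2 + (2*‖m‖^2) * t := by
      intro t
      have h0 := hQ (w + (t:ℂ) • m)
      have hx : ⟪w + (t:ℂ) • m, Tc (w + (t:ℂ) • m)⟫_ℂ
          = ⟪w, Tc w⟫_ℂ + (t:ℂ) * ⟪w, Tc m⟫_ℂ + (t:ℂ) * ⟪m, Tc w⟫_ℂ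
            + (t:ℂ)^2 * ⟪m, Tc m⟫_ℂ := by
        rw [map_add, map_smul, inner_add_left, inner_add_right, inner_add_right,
          inner_smul_left, inner_smul_right, inner_smul_left, inner_smul_right,
          Complex.conj_ofReal]
        ring
      rw [hx, hQw] at h0
      have hwm : ⟪w, Tc m⟫_ℂ = (starRingEnd ℂ) ⟪m, Tc w⟫_ℂ := hsym w m
      have hmw : ⟪m, Tc w⟫_ℂ = ((‖m‖^2 : ℝ) : ℂ) := by
        rw [← hm, inner_self_eq_norm_sq_to_K]
        norm_cast
      rw [hwm, hmw, Complex.conj_ofReal] at h0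
      simp only [zero_add, Complex.add_re, Complex.mul_re, Complex.ofReal_re,
        Complex.ofReal_im, Complex.re_ofReal_mul] at h0
      calc (0:ℝ) ≤ _ := h0
        _ = (⟪m, Tc m⟫_ℂ).re * t^2 + (2*‖m‖^2) * t := by
          push_cast
          ring_nf
          rw [show ((t:ℂ)^2).re = t^2 by norm_cast]
          rw [show ((t:ℂ)^2).im = 0 by norm_cast]
          ring
    have hB := quadAux ((⟪m, Tc m⟫_ℂ).re) (2*‖m‖^2) (hQ m) hexp
    have : ‖m‖ = 0 := by nlinarith [norm_nonneg m, sq_nonneg ‖m‖]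
    exact norm_eq_zero.mp this
  -- expand Tc w = 0
  have he : (r:ℂ) • w - ((2:ℂ)⁻¹ * c) • T w - ((2:ℂ)⁻¹ * (starRingEnd ℂ) c) • S w = 0 := by
    rw [← hTcApply]; exact hmzero
  have hTw : T w = (N:ℂ) • u + c • T u := by
    rw [hw, map_add, map_smul, hTv]
  have hSw : S w = S v + (c * (N:ℂ)) • v := by
    rw [hw, map_add, map_smul, hSu, smul_smul]
  rw [hTw, hSw, hw] at he
  -- he : r•(v + c•u) - (2⁻¹c)•(N•u + c•Tu) - (2⁻¹c̄)•(Sv + (cN)•v) = 0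
  have hsc1 : ((2:ℂ)⁻¹ * (starRingEnd ℂ) c) * (c * (N:ℂ)) = (r:ℂ) := by
    rw [hNrC]
    linear_combination (r:ℂ) * hcc
  have hsc2 : ((2:ℂ)⁻¹ * c) * (N:ℂ) = (r:ℂ) * c := by
    rw [hNrC]; ring
  have goal2 : ((2:ℂ)⁻¹ * c^2) • T u + ((2:ℂ)⁻¹ * (starRingEnd ℂ) c) • S v = (0:E) := by
    have expand : ((2:ℂ)⁻¹ * c^2) • T u + ((2:ℂ)⁻¹ * (starRingEnd ℂ) c) • S v
        = -((r:ℂ) • (v + c • u) - ((2:ℂ)⁻¹ * c) • ((N:ℂ) • u + c • T u)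
            - ((2:ℂ)⁻¹ * (starRingEnd ℂ) c) • (S v + (c * (N:ℂ)) • v)) := by
      rw [smul_add, smul_add, smul_add, smul_smul ((2:ℂ)⁻¹ * c) ((N:ℂ)) u,
        smul_smul ((2:ℂ)⁻¹ * c) c (T u),
        smul_smul ((2:ℂ)⁻¹ * (starRingEnd ℂ) c) (c * (N:ℂ)) v, hsc1, hsc2]
      match_scalars <;> ring
    rw [expand, he, neg_zero]
  have := congrArg (fun x : E => (2:ℂ) • x) goal2
  simpa [smul_add, smul_smul] using this

lemma mainKey [CompleteSpace E] (T : E →L[ℂ] E) (N r : ℝ)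
    (hTN : ‖T‖ = N) (hNpos : 0 < N) (hNr : N = 2*r)
    (hq : ∀ x : E, ‖⟪x, T x⟫_ℂ‖ ≤ r * ‖x‖^2)
    (v u : E) (hv : ‖v‖ = 1) (hu1 : ‖u‖ = 1) (hTv : T v = (N:ℂ) • u) :
    ⟪v, T v⟫_ℂ = 0 ∧ T u = 0 ∧ ContinuousLinearMap.adjoint T u = (N:ℂ) • v := by
  have hNC : (N:ℂ) ≠ 0 := by exact_mod_cast hNpos.ne'
  have hTvn : ‖T v‖ = N := by
    rw [hTv, norm_smul, hu1, mul_one, Complex.norm_real, Real.norm_eq_abs,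
      abs_of_pos hNpos]
  have hSTv : ContinuousLinearMap.adjoint T (T v) = ((N:ℂ)^2) • v :=
    adjTv T N hTN hNpos v hv hTvn
  have hu' : u = (N:ℂ)⁻¹ • T v := by rw [hTv, smul_smul, inv_mul_cancel₀ hNC, one_smul]
  have hSu : ContinuousLinearMap.adjoint T u = (N:ℂ) • v := by
    rw [hu', map_smul, hSTv, smul_smul]
    congr 1
    field_simp
  have hvu : ⟪v, u⟫_ℂ = (N:ℂ)⁻¹ * ⟪v, T v⟫_ℂ := by rw [hu', inner_smul_right]
  have huu : ⟪u, u⟫_ℂ = 1 := by rw [inner_self_eq_norm_sq_to_K, hu1]; norm_num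
  have hvv : ⟪v, v⟫_ℂ = 1 := by rw [inner_self_eq_norm_sq_to_K, hv]; norm_num
  have huTv : ⟪u, T v⟫_ℂ = (N:ℂ) := by rw [hTv, inner_smul_right, huu, mul_one]
  have hP : ∀ c : ℂ, ‖c‖ = 1 →
      ‖(⟪v, T v⟫_ℂ + ⟪u, T u⟫_ℂ
        + (c * ⟪v, T u⟫_ℂ + (starRingEnd ℂ) c * N))‖ ≤ N + (c * ⟪v, T v⟫_ℂ).re :=
    fun c hc => ineqP T N r hNpos hNr hq v u hv hu1 _ _ _ rfl rfl rfl hvu huu huTv c hc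
  obtain ⟨hb0, ha0, hd0⟩ := stepOne N hNpos _ _ _ hP
  have hvu0 : ⟪v, u⟫_ℂ = 0 := by rw [hvu, ha0, mul_zero]
  have hTc : ∀ c : ℂ, ‖c‖ = 1 →
      (c^2) • T u + ((starRingEnd ℂ) c) • ContinuousLinearMap.adjoint T v = (0:E) :=
    fun c hc => stepTwo T N r hNpos hNr hq v u hv hu1 huu hvv ha0 hb0 hd0 hvu0 huTv hTv hSu c hc
  have h1 := hTc 1 (by simp)
  have hI := hTc Complex.I (by simp)
  simp only [one_pow, map_one, one_smul, Complex.I_sq, neg_smul, Complex.conj_I] at h1 hI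
  have hSv : ContinuousLinearMap.adjoint T v = 0 := by
    have e1 : T u = -ContinuousLinearMap.adjoint T v := by
      linear_combination (norm := module) h1
    rw [e1] at hI
    have e2 : ((1:ℂ) - Complex.I) • ContinuousLinearMap.adjoint T v = 0 := by
      rw [sub_smul, one_smul]
      linear_combination (norm := module) hI
    rcases smul_eq_zero.mp e2 with h' | h'
    · exact absurd h' (by norm_num [Complex.ext_iff])
    · exact h'
  have hTu : T u = 0 := by
    have e1 : T u = -ContinuousLinearMap.adjoint T v := by
      linear_combination (norm := module) h1
    rw [e1, hSv, neg_zero]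
  exact ⟨ha0, hTu, hSu⟩
end Helpers

theorem stmt12 {n : ℕ} (A : Matrix (Fin n) (Fin n) ℂ) (hA : A ≠ 0)
    (h : opNorm A = 2 * numRadius A)
    (v : EuclideanSpace ℂ (Fin n)) (hv : ‖v‖ = 1) (hvmax : ‖toCLM A v‖ = opNorm A * ‖v‖)
    (u : EuclideanSpace ℂ (Fin n)) (hu : u = (opNorm A)⁻¹ • toCLM A v)
    (α β : ℝ) (z : EuclideanSpace ℂ (Fin n))
    (hzdef : z = ((Real.sqrt 2 : ℂ))⁻¹ •
      (Complex.exp ((α : ℂ) * Complex.I) • v + Complex.exp ((β : ℂ) * Complex.I) • u)) :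
    ‖z‖ = 1 ∧ ‖⟪z, toCLM A z⟫_ℂ‖ = numRadius A ∧
    ((Real.sqrt 2 : ℂ))⁻¹ • Complex.exp ((α : ℂ) * Complex.I) • v ∈
      LinearMap.range (ContinuousLinearMap.adjoint (toCLM A)).toLinearMap ∧
    z - ((Real.sqrt 2 : ℂ))⁻¹ • Complex.exp ((α : ℂ) * Complex.I) • v ∈
      LinearMap.ker (toCLM A).toLinearMap ∧
    ⟪Complex.exp ((α : ℂ) * Complex.I) • v,
      toCLM A (Complex.exp ((α : ℂ) * Complex.I) • v)⟫_ℂ = 0 := by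
  have hTne : toCLM A ≠ 0 := by
    intro h0
    apply hA
    have h1 : (Matrix.toEuclideanCLM (𝕜 := ℂ) A : _ →ₗ[ℂ] _) = Matrix.toEuclideanLin A :=
      Matrix.coe_toEuclideanCLM_eq_toEuclideanLin A
    have h2 : Matrix.toEuclideanLin A = 0 := by
      rw [← h1]
      have : Matrix.toEuclideanCLM (𝕜 := ℂ) A = 0 := h0
      rw [this]
      rfl
    exact Matrix.toEuclideanLin.injective (by rw [h2, map_zero])
  have hNpos : 0 < opNorm A := by
    unfold opNorm
    exact norm_pos_iff.mpr hTne
  have hNC : ((opNorm A : ℝ) : ℂ) ≠ 0 := by exact_mod_cast hNpos.ne'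
  have hNr : opNorm A = 2 * numRadius A := h
  have hrpos : 0 < numRadius A := by linarith
  have hbd : ∀ x : EuclideanSpace ℂ (Fin n), ‖x‖ = 1 →
      ‖⟪x, toCLM A x⟫_ℂ‖ ≤ numRadius A := by
    intro x hx
    unfold numRadius
    apply le_csSup
    · refine ⟨opNorm A, ?_⟩
      rintro y ⟨w, hw, rfl⟩
      calc ‖⟪w, toCLM A w⟫_ℂ‖ = ‖⟪w, toCLM A w⟫_ℂ‖ := rfl
        _ ≤ ‖w‖ * ‖toCLM A w‖ := norm_inner_le_norm _ _
        _ ≤ ‖w‖ * (‖toCLM A‖ * ‖w‖) :=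
            mul_le_mul_of_nonneg_left ((toCLM A).le_opNorm w) (norm_nonneg w)
        _ = opNorm A := by rw [hw]; unfold opNorm; ring
    · exact ⟨x, hx, rfl⟩
  have hq := nradScale (toCLM A) (numRadius A) hrpos.le hbd
  have hTvn : ‖toCLM A v‖ = opNorm A := by rw [hvmax, hv, mul_one]
  have hu1 : ‖u‖ = 1 := by
    rw [hu, norm_smul, hTvn, norm_inv, Real.norm_eq_abs, abs_of_pos hNpos,
      inv_mul_cancel₀ hNpos.ne']
  have hTvC : toCLM A v = ((opNorm A : ℝ) : ℂ) • u := by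
    rw [hu, ← Complex.coe_smul, smul_smul, Complex.ofReal_inv, mul_inv_cancel₀ hNC, one_smul]
  obtain ⟨ha0, hTu, hSu⟩ := mainKey (toCLM A) (opNorm A) (numRadius A) rfl hNpos hNr hq
    v u hv hu1 hTvC
  have hvu0 : ⟪v, u⟫_ℂ = 0 := by
    rw [hu, ← Complex.coe_smul, inner_smul_right, ha0, mul_zero]
  have huuC : ⟪u, u⟫_ℂ = 1 := by rw [inner_self_eq_norm_sq_to_K, hu1]; norm_num
  set eα := Complex.exp ((α : ℂ) * Complex.I) with heα
  set eβ := Complex.exp ((β : ℂ) * Complex.I) with heβ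
  have haα : ‖eα‖ = 1 := Complex.norm_exp_ofReal_mul_I α
  have haβ : ‖eβ‖ = 1 := Complex.norm_exp_ofReal_mul_I β
  have hs2pos : (0:ℝ) < Real.sqrt 2 := by positivity
  -- norm of z
  have hX2 : ‖eα • v + eβ • u‖^2 = 2 := by
    have e1 : ‖eα • v + eβ • u‖^2
        = ‖eα • v‖^2 + 2 * Complex.re ⟪eα • v, eβ • u⟫_ℂ + ‖eβ • u‖^2 :=
      @norm_add_sq ℂ _ _ _ _ _ _
    have e2 : ⟪eα • v, eβ • u⟫_ℂ = 0 := by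
      rw [inner_smul_left, inner_smul_right, hvu0, mul_zero, mul_zero]
    have e3 : ‖eα • v‖ = 1 := by rw [norm_smul, hv, mul_one, haα]
    have e4 : ‖eβ • u‖ = 1 := by rw [norm_smul, hu1, mul_one, haβ]
    rw [e1, e2, e3, e4]
    norm_num
  have hz1 : ‖z‖ = 1 := by
    have h1 : ‖((Real.sqrt 2 : ℂ))⁻¹‖ = (Real.sqrt 2)⁻¹ := by
      rw [norm_inv, Complex.norm_real, Real.norm_eq_abs, abs_of_pos hs2pos]
    have h2 : ‖eα • v + eβ • u‖ = Real.sqrt 2 := by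
      rw [← Real.sqrt_sq (norm_nonneg (eα • v + eβ • u)), hX2]
    rw [hzdef, norm_smul, h1, h2, inv_mul_cancel₀ hs2pos.ne']
  refine ⟨hz1, ?_, ?_, ?_, ?_⟩
  · -- numerical radius value
    have hTz : toCLM A z = ((Real.sqrt 2:ℂ))⁻¹ • eα • (((opNorm A : ℝ):ℂ) • u) := by
      rw [hzdef, map_smul, map_add, map_smul, map_smul, hTu, hTvC, smul_zero, add_zero]
    have hzin : ⟪z, toCLM A z⟫_ℂ
        = ((Real.sqrt 2:ℂ))⁻¹ * ((Real.sqrt 2:ℂ))⁻¹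
          * ((starRingEnd ℂ) eβ * (eα * ((opNorm A : ℝ):ℂ))) := by
      rw [hTz, hzdef]
      simp only [inner_smul_left, inner_smul_right, inner_add_left, hvu0, huuC,
        map_inv₀, Complex.conj_ofReal]
      ring
    rw [hzin]
    rw [norm_mul, norm_mul, norm_mul, norm_mul, Complex.norm_conj, haα, haβ, norm_inv,
      Complex.norm_real, Complex.norm_real, Real.norm_eq_abs, Real.norm_eq_abs, abs_of_pos hs2pos, abs_of_pos hNpos]
    rw [show (Real.sqrt 2)⁻¹ * (Real.sqrt 2)⁻¹ = 2⁻¹ by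
      rw [← mul_inv]; congr 1; exact Real.mul_self_sqrt (by norm_num)]
    rw [hNr]
    ring
  · -- range of adjoint
    refine ⟨((opNorm A : ℝ) : ℂ)⁻¹ • (((Real.sqrt 2:ℂ))⁻¹ • (eα • u)), ?_⟩
    show ContinuousLinearMap.adjoint (toCLM A) _ = _
    rw [map_smul, map_smul, map_smul, hSu]
    rw [smul_smul, smul_smul, smul_smul, smul_smul]
    congr 1
    field_simp
  · -- kernel
    have hzr : z - ((Real.sqrt 2:ℂ))⁻¹ • eα • v = ((Real.sqrt 2:ℂ))⁻¹ • (eβ • u) := by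
      rw [hzdef, smul_add, add_sub_cancel_left]
    refine LinearMap.mem_ker.mpr ?_
    show toCLM A _ = 0
    rw [hzr, map_smul, map_smul, hTu, smul_zero, smul_zero]
  · rw [map_smul, inner_smul_left, inner_smul_right, ha0, mul_zero, mul_zero]
end

section
/- If A ∈ ℂ^{n×n} is half-radial, then ‖A* + A‖ = ‖A‖. -/
set_option synthInstance.maxHeartbeats 1000000
set_option maxHeartbeats 1000000

open scoped InnerProductSpace
open ContinuousLinearMap

variable {E : Type*} [NormedAddCommGroup E] [InnerProductSpace ℂ E] [CompleteSpace E]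

lemma selfadj_opNorm_le (H : E →L[ℂ] E) (hH : IsSelfAdjoint H) {m : ℝ} (hm : 0 ≤ m)
    (hb : ∀ u : E, ‖⟪u, H u⟫_ℂ‖ ≤ m * ‖u‖ ^ 2) : ‖H‖ ≤ m := by
  have hadj : ∀ x y : E, ⟪H x, y⟫_ℂ = ⟪x, H y⟫_ℂ := fun x y => by
    rw [← adjoint_inner_left, hH.adjoint_eq]
  have key : ∀ x y : E, 4 * (⟪x, H y⟫_ℂ).re ≤ 2 * m * (‖x‖^2 + ‖y‖^2) := by
    intro x y
    have e1 : ⟪x + y, H (x + y)⟫_ℂ - ⟪x - y, H (x - y)⟫_ℂ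
        = 2 * ⟪x, H y⟫_ℂ + 2 * ⟪y, H x⟫_ℂ := by
      simp only [map_add, map_sub, inner_add_left, inner_add_right,
        inner_sub_left, inner_sub_right]
      ring
    have e2 : (⟪y, H x⟫_ℂ).re = (⟪x, H y⟫_ℂ).re := by
      rw [← hadj x y, ← inner_conj_symm y (H x)]
      exact Complex.conj_re _
    have h1 : (⟪x + y, H (x + y)⟫_ℂ).re ≤ m * ‖x + y‖^2 :=
      (abs_le.1 (le_trans (Complex.abs_re_le_norm _) (hb (x + y)))).2
    have h2 : -(m * ‖x - y‖^2) ≤ (⟪x - y, H (x - y)⟫_ℂ).re :=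
      (abs_le.1 (le_trans (Complex.abs_re_le_norm _) (hb (x - y)))).1
    have epar : ‖x + y‖^2 + ‖x - y‖^2 = 2 * (‖x‖^2 + ‖y‖^2) := by
      have := parallelogram_law_with_norm ℂ x y
      nlinarith [this]
    have hre : 4 * (⟪x, H y⟫_ℂ).re
        = (⟪x + y, H (x + y)⟫_ℂ).re - (⟪x - y, H (x - y)⟫_ℂ).re := by
      have := congrArg Complex.re e1
      simp only [Complex.sub_re, Complex.add_re, Complex.mul_re] at this
      norm_num at this
      simp only [map_add, map_sub, inner_add_left, inner_add_right, inner_sub_left, inner_sub_right, Complex.add_re, Complex.sub_re]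
      linarith [e2]
    nlinarith [h1, h2, epar, hre]
  refine opNorm_le_bound H hm (fun y => ?_)
  rcases eq_or_ne (H y) 0 with hy | hy
  · simp only [hy, norm_zero]; positivity
  have hny : 0 < ‖H y‖ := norm_pos_iff.2 hy
  have hy0 : 0 < ‖y‖ := by
    rcases eq_or_ne y 0 with rfl | h0
    · exact absurd (map_zero H) hy
    · exact norm_pos_iff.2 h0
  set x : E := (↑(‖y‖ / ‖H y‖) : ℂ) • H y with hxdef
  have hxn : ‖x‖ = ‖y‖ := by
    rw [hxdef, norm_smul, Complex.norm_real, Real.norm_eq_abs,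
      abs_of_nonneg (div_nonneg (norm_nonneg y) (norm_nonneg (H y)))]
    field_simp
  have hre : (⟪x, H y⟫_ℂ).re = ‖y‖ * ‖H y‖ := by
    have : ⟪x, H y⟫_ℂ = ((‖y‖ / ‖H y‖ * ‖H y‖^2 : ℝ) : ℂ) := by
      rw [hxdef, inner_smul_left, inner_self_eq_norm_sq_to_K]
      push_cast
      ring_nf
      simp [Complex.conj_ofReal]
      ring
    rw [this, Complex.ofReal_re]
    field_simp
  have hk := key x y
  rw [hre, hxn] at hk
  nlinarith [hk, hy0]

theorem stmt14 {n : ℕ} (A : Matrix (Fin n) (Fin n) ℂ) (hA : A ≠ 0)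
    (h : opNorm A = 2 * numRadius A) :
    opNorm (A.conjTranspose + A) = opNorm A := by
  set T := toCLM A with hT
  set M := opNorm A with hM
  have hMnorm : M = ‖T‖ := rfl
  have hTne : T ≠ 0 := by
    intro h0
    apply hA
    have h1 : Matrix.toEuclideanCLM (𝕜 := ℂ) A = 0 := h0
    rw [← map_zero (Matrix.toEuclideanCLM (𝕜 := ℂ) (n := Fin n))] at h1
    exact (Matrix.toEuclideanCLM (𝕜 := ℂ)).injective h1
  have hMpos : 0 < M := by
    rw [hMnorm]; exact norm_pos_iff.2 hTne
  -- the key pointwise bound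
  have K1 : ∀ z : EuclideanSpace ℂ (Fin n), ‖z‖ = 1 → ‖⟪z, T z⟫_ℂ‖ ≤ M / 2 := by
    intro z hz
    have hbdd : BddAbove {r : ℝ | ∃ z : EuclideanSpace ℂ (Fin n), ‖z‖ = 1 ∧
        r = ‖⟪z, toCLM A z⟫_ℂ‖} := by
      refine ⟨M, fun r hr => ?_⟩
      obtain ⟨u, hu, rfl⟩ := hr
      calc ‖⟪u, toCLM A u⟫_ℂ‖ = ‖⟪u, toCLM A u⟫_ℂ‖ := rfl
        _ ≤ ‖u‖ * ‖toCLM A u‖ := norm_inner_le_norm _ _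
        _ ≤ ‖u‖ * (‖toCLM A‖ * ‖u‖) := by
            gcongr; exact (toCLM A).le_opNorm u
        _ = M := by rw [hu, hMnorm]; ring
    have hmem : ‖⟪z, T z⟫_ℂ‖ ∈ {r : ℝ | ∃ z : EuclideanSpace ℂ (Fin n), ‖z‖ = 1 ∧
        r = ‖⟪z, toCLM A z⟫_ℂ‖} := ⟨z, hz, rfl⟩
    have := le_csSup hbdd hmem
    have hnum : numRadius A = M / 2 := by rw [hM] at h ⊢; rw [h]; ring_nf
    rw [← hnum]
    exact this
  have K : ∀ z : EuclideanSpace ℂ (Fin n), ‖⟪z, T z⟫_ℂ‖ ≤ M / 2 * ‖z‖ ^ 2 := by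
    intro z
    rcases eq_or_ne z 0 with rfl | hz0
    · simp
    · have hnz : (0:ℝ) < ‖z‖ := norm_pos_iff.2 hz0
      set u : EuclideanSpace ℂ (Fin n) := (↑(‖z‖⁻¹) : ℂ) • z with hu
      have hun : ‖u‖ = 1 := by
        rw [hu, norm_smul, Complex.norm_real, Real.norm_eq_abs,
          abs_of_nonneg (inv_nonneg.2 hnz.le), inv_mul_cancel₀ hnz.ne']
      have hinner : ⟪u, T u⟫_ℂ = ((‖z‖⁻¹ ^ 2 : ℝ) : ℂ) * ⟪z, T z⟫_ℂ := by
        rw [hu, map_smul, inner_smul_left, inner_smul_right, Complex.conj_ofReal]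
        push_cast
        ring
      have := K1 u hun
      rw [hinner, norm_mul, Complex.norm_real, Real.norm_eq_abs,
        abs_of_nonneg (by positivity : (0:ℝ) ≤ ‖z‖⁻¹ ^ 2)] at this
      have h2 : ‖⟪z, T z⟫_ℂ‖ ≤ M / 2 * ‖z‖ ^ 2 := by
        have hz2 : (0:ℝ) < ‖z‖ ^ 2 := by positivity
        calc ‖⟪z, T z⟫_ℂ‖ = (‖z‖⁻¹ ^ 2 * ‖⟪z, T z⟫_ℂ‖) * ‖z‖^2 := by
              field_simp
          _ ≤ M / 2 * ‖z‖ ^ 2 := by gcongr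
      exact h2

  -- maximizer on the sphere
  have hsne : (Metric.sphere (0 : EuclideanSpace ℂ (Fin n)) 1).Nonempty := by
    obtain ⟨v, hv⟩ : ∃ v, T v ≠ 0 := by
      by_contra hc
      push_neg at hc
      exact hTne (ContinuousLinearMap.ext fun v => by simp [hc v])
    have hv0 : v ≠ 0 := fun h0 => hv (by simp [h0])
    have : Nontrivial (EuclideanSpace ℂ (Fin n)) := nontrivial_of_ne v 0 hv0
    exact NormedSpace.sphere_nonempty.2 zero_le_one
  obtain ⟨x, hxs, hxmax⟩ := (isCompact_sphere (0 : EuclideanSpace ℂ (Fin n)) 1).exists_isMaxOn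
    hsne (Continuous.continuousOn (T.continuous.norm))
  have hx1 : ‖x‖ = 1 := by simpa using hxs
  have hTxM : ‖T x‖ = M := by
    refine le_antisymm (by simpa [hx1, ← hMnorm] using T.le_opNorm x) ?_
    rw [hMnorm]
    refine ContinuousLinearMap.opNorm_le_bound T (norm_nonneg _) (fun z => ?_)
    rcases eq_or_ne z 0 with rfl | hz0
    · simp
    · have hnz : (0:ℝ) < ‖z‖ := norm_pos_iff.2 hz0
      set u : EuclideanSpace ℂ (Fin n) := (↑(‖z‖⁻¹) : ℂ) • z with hu
      have hun : ‖u‖ = 1 := by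
        rw [hu, norm_smul, Complex.norm_real, Real.norm_eq_abs,
          abs_of_nonneg (inv_nonneg.2 hnz.le), inv_mul_cancel₀ hnz.ne']
      have hmem : u ∈ Metric.sphere (0 : EuclideanSpace ℂ (Fin n)) 1 := by
        simp [hun]
      have := hxmax hmem
      have hTu : ‖T u‖ = ‖z‖⁻¹ * ‖T z‖ := by
        rw [hu, map_smul, norm_smul, Complex.norm_real, Real.norm_eq_abs,
          abs_of_nonneg (inv_nonneg.2 hnz.le)]
      have h1 : ‖z‖⁻¹ * ‖T z‖ ≤ ‖T x‖ := by rw [← hTu]; exact this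
      calc ‖T z‖ = (‖z‖⁻¹ * ‖T z‖) * ‖z‖ := by field_simp
        _ ≤ ‖T x‖ * ‖z‖ := by gcongr
  -- set up y, b, c, d
  set y : EuclideanSpace ℂ (Fin n) := (↑(M⁻¹ : ℝ) : ℂ) • T x with hydef
  have hTx : T x = (↑M : ℂ) • y := by
    rw [hydef, smul_smul, ← Complex.ofReal_mul, mul_inv_cancel₀ hMpos.ne']
    simp
  have hy1 : ‖y‖ = 1 := by
    rw [hydef, norm_smul, Complex.norm_real, Real.norm_eq_abs,
      abs_of_nonneg (inv_nonneg.2 hMpos.le), hTxM, inv_mul_cancel₀ hMpos.ne']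
  set c := ⟪x, y⟫_ℂ with hcdef
  set b := ⟪x, T y⟫_ℂ with hbdef
  set d := ⟪y, T y⟫_ℂ with hddef
  have hyTx : ⟪y, T x⟫_ℂ = (M : ℂ) := by
    rw [hTx, inner_smul_right, inner_self_eq_norm_sq_to_K, hy1]
    simp
  have hxTx : ⟪x, T x⟫_ℂ = (M:ℂ) * c := by rw [hTx, inner_smul_right]
  have expand : ∀ t : ℂ, ⟪x + t • y, T (x + t • y)⟫_ℂ
      = (M:ℂ)*c + t*b + (starRingEnd ℂ) t * (M:ℂ) + (starRingEnd ℂ) t * t * d := by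
    intro t
    rw [map_add, map_smul]
    simp only [inner_add_left, inner_add_right, inner_smul_left, inner_smul_right,
      hxTx, hyTx]
    ring
  have normsq : ∀ t : ℂ, ‖t‖ = 1 → (‖x + t • y‖:ℝ)^2 = 2 + 2*(t*c).re := by
    intro t ht
    have hin : ⟪x, t • y⟫_ℂ = t * c := inner_smul_right _ _ _
    rw [norm_add_sq (𝕜 := ℂ), hx1, hin, norm_smul, hy1, ht,
      RCLike.re_to_complex]
    ring
  set F : ℂ → ℂ := fun t => (M:ℂ)*c + t*b + (starRingEnd ℂ) t * (M:ℂ) + d with hFdef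
  have C : ∀ t : ℂ, ‖t‖ = 1 → ‖F t‖ ≤ M * (1 + (t*c).re) := by
    intro t ht
    have hK := K (x + t • y)
    rw [expand t, normsq t ht] at hK
    have htt : (starRingEnd ℂ) t * t = 1 := by
      rw [mul_comm, Complex.mul_conj, ← Complex.sq_norm, ht]
      norm_num
    rw [htt, one_mul] at hK
    calc ‖F t‖
        ≤ M / 2 * (2 + 2*(t*c).re) := hK
      _ = M * (1 + (t*c).re) := by ring
  -- step 1 : b = 0
  have hsub : ∀ t : ℂ, ‖t‖ = 1 →
      ‖t*b + (starRingEnd ℂ) t * (M:ℂ)‖ ≤ M := by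
    intro t ht
    have h1 := C t ht
    have h2 := C (-t) (by simpa using ht)
    have hkey : (2:ℂ)*(t*b + (starRingEnd ℂ) t * (M:ℂ)) = F t - F (-t) := by
      rw [hFdef]
      simp only [map_neg]
      ring
    have habs : ‖(2:ℂ)*(t*b + (starRingEnd ℂ) t * (M:ℂ))‖
        ≤ M * (1 + (t*c).re) + M * (1 + ((-t)*c).re) := by
      rw [hkey]
      calc ‖F t - F (-t)‖ ≤ ‖F t‖ + ‖F (-t)‖ := by
            exact norm_sub_le (F t) (F (-t))
        _ ≤ M * (1 + (t*c).re) + M * (1 + ((-t)*c).re) := add_le_add h1 h2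
    rw [norm_mul] at habs
    have : ((-t)*c).re = -((t*c).re) := by
      have : (-t)*c = -(t*c) := by ring
      rw [this, Complex.neg_re]
    rw [this] at habs
    simp only [Complex.norm_two] at habs
    linarith
  have hb0 : b = 0 := by
    by_contra hb
    have habspos : 0 < ‖b‖ := norm_pos_iff.mpr hb
    set s := Complex.exp ((Complex.arg b / 2 : ℝ) * Complex.I) with hsdef
    have hs1 : ‖s‖ = 1 := Complex.norm_exp_ofReal_mul_I _
    have hs2 : s * s = b / (‖b‖ : ℂ) := by
      rw [hsdef, ← Complex.exp_add]
      have harg : ((Complex.arg b / 2 : ℝ):ℂ)*Complex.I + ((Complex.arg b / 2 : ℝ):ℂ)*Complex.I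
          = (Complex.arg b : ℂ)*Complex.I := by push_cast; ring
      rw [harg, eq_div_iff (by exact_mod_cast habspos.ne' : (‖b‖ : ℂ) ≠ 0),
        mul_comm]
      exact Complex.norm_mul_exp_arg_mul_I b
    set t := (starRingEnd ℂ) s with htdef
    have ht1 : ‖t‖ = 1 := by rw [htdef, Complex.norm_conj]; exact hs1
    have hss1 : (starRingEnd ℂ) s * s = 1 := by
      rw [mul_comm, Complex.mul_conj, ← Complex.sq_norm, hs1]
      norm_num
    have hfac : t * b + (starRingEnd ℂ) t * (M:ℂ) = (starRingEnd ℂ) s * (b + s*s*(M:ℂ)) := by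
      rw [htdef, Complex.conj_conj]
      have : (starRingEnd ℂ) s * (b + s*s*(M:ℂ))
          = (starRingEnd ℂ) s * b + ((starRingEnd ℂ) s * s) * (s * (M:ℂ)) := by ring
      rw [this, hss1]
      ring
    have hfac2 : b + s*s*(M:ℂ) = (b / (‖b‖ : ℂ)) * ((‖b‖ : ℂ) + (M:ℂ)) := by
      have hbne : ((‖b‖ : ℝ):ℂ) ≠ 0 := by exact_mod_cast habspos.ne'
      rw [hs2]
      field_simp
    have habs2 : ‖t * b + (starRingEnd ℂ) t * (M:ℂ)‖ = ‖b‖ + M := by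
      rw [hfac, norm_mul, Complex.norm_conj, hs1, one_mul, hfac2, norm_mul, norm_div,
        Complex.norm_real, Real.norm_eq_abs, abs_of_nonneg (norm_nonneg b),
        div_self habspos.ne']
      rw [one_mul, ← Complex.ofReal_add]
      rw [Complex.norm_real, Real.norm_eq_abs]
      exact abs_of_nonneg (by positivity)
    have := hsub t ht1
    rw [habs2] at this
    linarith
  -- |c| ≤ 1/2
  have hc2 : ‖c‖ ≤ 1/2 := by
    have := K1 x hx1
    rw [hxTx, norm_mul, Complex.norm_real, Real.norm_eq_abs, abs_of_nonneg hMpos.le] at this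
    nlinarith
  -- step 2 : d = 0
  have hd0 : d = 0 := by
    by_contra hd
    have hdpos : 0 < ‖d‖ := norm_pos_iff.mpr hd
    set t := (starRingEnd ℂ) d / (‖d‖ : ℂ) with htdef
    have ht1 : ‖t‖ = 1 := by
      rw [htdef, norm_div, Complex.norm_conj, Complex.norm_real, Real.norm_eq_abs,
        abs_of_nonneg (norm_nonneg d), div_self hdpos.ne']
    have htd : t * d = ((‖d‖ : ℝ) : ℂ) := by
      have h1 : (starRingEnd ℂ) d * d = ((‖d‖ ^ 2 : ℝ) : ℂ) := by
        rw [mul_comm, Complex.mul_conj]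
        norm_cast
        exact (Complex.sq_norm d).symm
      rw [htdef, div_mul_eq_mul_div, h1,
        div_eq_iff (by exact_mod_cast hdpos.ne' : (‖d‖ : ℂ) ≠ 0)]
      push_cast
      ring
    have hC := C t ht1
    have he : F t = ((M:ℂ)*c + d) + (starRingEnd ℂ) t * (M:ℂ) := by
      rw [hFdef]
      simp only [hb0]
      ring
    rw [he] at hC
    set g := (M:ℂ)*c + d with hgdef
    set r := (t*c).re with hrdef
    have hrc : |r| ≤ ‖c‖ := by
      rw [hrdef]
      calc |(t*c).re| ≤ ‖t*c‖ := Complex.abs_re_le_norm _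
        _ = ‖c‖ := by rw [norm_mul, ht1, one_mul]
    have hsq : (‖g + (starRingEnd ℂ) t * (M:ℂ)‖)^2 ≤ (M*(1+r))^2 :=
      pow_le_pow_left₀ (norm_nonneg _) hC 2
    rw [Complex.sq_norm, Complex.normSq_add] at hsq
    have h1 : Complex.normSq ((starRingEnd ℂ) t * (M:ℂ)) = M^2 := by
      rw [Complex.normSq_mul, Complex.normSq_conj, ← Complex.sq_norm, ht1,
        Complex.normSq_ofReal]
      ring
    have h2 : (g * (starRingEnd ℂ) ((starRingEnd ℂ) t * (M:ℂ))).re = M * (M*r + ‖d‖) := by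
      rw [map_mul, Complex.conj_conj, Complex.conj_ofReal]
      have : g * (t * (M:ℂ)) = (M:ℂ) * (g * t) := by ring
      rw [this, Complex.re_ofReal_mul]
      congr 1
      have : g * t = (M:ℂ) * (t*c) + ((‖d‖ : ℝ) : ℂ) := by
        rw [hgdef, ← htd]; ring
      rw [this, Complex.add_re, Complex.re_ofReal_mul, Complex.ofReal_re]
    have h4 : Complex.normSq g = M^2 * Complex.normSq c + Complex.normSq d
        + 2 * M * (c * (starRingEnd ℂ) d).re := by
      rw [hgdef, Complex.normSq_add, Complex.normSq_mul, Complex.normSq_ofReal]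
      have : ((M:ℂ) * c * (starRingEnd ℂ) d).re = M * (c * (starRingEnd ℂ) d).re := by
        have e : (M:ℂ) * c * (starRingEnd ℂ) d = (M:ℂ) * (c * (starRingEnd ℂ) d) := by ring
        rw [e, Complex.re_ofReal_mul]
      rw [this]
      ring
    have h5 : -(‖c‖ * ‖d‖) ≤ (c * (starRingEnd ℂ) d).re := by
      have := Complex.abs_re_le_norm (c * (starRingEnd ℂ) d)
      rw [norm_mul, Complex.norm_conj] at this
      have := abs_le.1 this
      linarith [this.1]
    have hnsqc : Complex.normSq c = (‖c‖)^2 := (Complex.sq_norm c).symm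
    have hnsqd : Complex.normSq d = (‖d‖)^2 := (Complex.sq_norm d).symm
    rw [h1, h2, h4, hnsqc, hnsqd] at hsq
    have hr2 : r^2 ≤ (‖c‖)^2 := by nlinarith [abs_le.1 hrc]
    nlinarith [hsq, hr2, h5, hc2, hdpos, hMpos, norm_nonneg c, norm_nonneg d,
      mul_le_mul_of_nonneg_left hr2 (sq_nonneg M),
      mul_le_mul_of_nonneg_left h5 hMpos.le,
      mul_le_mul_of_nonneg_right hc2 (mul_pos hMpos hdpos).le]
  -- conclusion
  set z : EuclideanSpace ℂ (Fin n) := x + (1:ℂ) • y with hzdef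
  have hzT : ⟪z, T z⟫_ℂ = (M:ℂ)*c + (M:ℂ) := by
    rw [hzdef, expand 1, hb0, hd0]
    simp
  have hzn : ‖z‖^2 = 2 + 2*c.re := by
    rw [hzdef, normsq 1 (by simp)]
    simp
  have hcre : -(1/2 : ℝ) ≤ c.re := by
    have h1 := Complex.abs_re_le_norm c
    have := abs_le.1 (le_trans h1 hc2)
    linarith [this.1]
  have hHdef : toCLM (A.conjTranspose + A) = star T + T := by
    rw [toCLM, ← Matrix.star_eq_conjTranspose, map_add, map_star]
    rfl
  have hHsa : IsSelfAdjoint (star T + T) := by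
    exact IsSelfAdjoint.star_add_self T
  have hHinner : ∀ u : EuclideanSpace ℂ (Fin n),
      ⟪u, (star T + T) u⟫_ℂ = (starRingEnd ℂ) ⟪u, T u⟫_ℂ + ⟪u, T u⟫_ℂ := by
    intro u
    rw [ContinuousLinearMap.add_apply, inner_add_right,
      ContinuousLinearMap.star_eq_adjoint, ContinuousLinearMap.adjoint_inner_right,
      ← inner_conj_symm]
  have hub : ‖star T + T‖ ≤ M := by
    refine selfadj_opNorm_le _ hHsa hMpos.le (fun u => ?_)
    rw [hHinner u]
    have e1 : (starRingEnd ℂ) ⟪u, T u⟫_ℂ + ⟪u, T u⟫_ℂ = ((2 * (⟪u, T u⟫_ℂ).re : ℝ) : ℂ) := by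
      rw [add_comm, Complex.add_conj]
      try push_cast
      try ring
    rw [e1, Complex.norm_real, Real.norm_eq_abs]
    have := K u
    calc |2 * (⟪u, T u⟫_ℂ).re| = 2 * |(⟪u, T u⟫_ℂ).re| := by rw [abs_mul]; norm_num
      _ ≤ 2 * ‖⟪u, T u⟫_ℂ‖ := by gcongr; exact Complex.abs_re_le_norm _
      _ ≤ 2 * (M / 2 * ‖u‖^2) := by gcongr
      _ = M * ‖u‖^2 := by ring
  have hlb : M ≤ ‖star T + T‖ := by
    have hinZ : ⟪z, (star T + T) z⟫_ℂ = ((2*(M + M*c.re) : ℝ) : ℂ) := by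
      rw [hHinner z, hzT, add_comm, Complex.add_conj]
      have : ((M:ℂ)*c + (M:ℂ)).re = M*c.re + M := by
        rw [Complex.add_re, Complex.re_ofReal_mul, Complex.ofReal_re]
      rw [this]
      try push_cast
      try ring
    have habsZ : ‖⟪z, (star T + T) z⟫_ℂ‖ = M * ‖z‖^2 := by
      rw [hinZ, Complex.norm_real, Real.norm_eq_abs, hzn, abs_of_nonneg (by nlinarith)]
      ring
    have hcs : ‖⟪z, (star T + T) z⟫_ℂ‖ ≤ ‖z‖ * ‖(star T + T) z‖ := by
      exact norm_inner_le_norm _ _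
    have hzb : ‖(star T + T) z‖ ≤ ‖star T + T‖ * ‖z‖ := (star T + T).le_opNorm z
    have hz2 : (1:ℝ) ≤ ‖z‖^2 := by rw [hzn]; linarith
    have hfin : M * ‖z‖^2 ≤ ‖star T + T‖ * ‖z‖^2 := by
      rw [← habsZ]
      calc ‖⟪z, (star T + T) z⟫_ℂ‖ ≤ ‖z‖ * ‖(star T + T) z‖ := hcs
        _ ≤ ‖z‖ * (‖star T + T‖ * ‖z‖) := by gcongr
        _ = ‖star T + T‖ * ‖z‖^2 := by ring
    have hz2pos : (0:ℝ) < ‖z‖^2 := lt_of_lt_of_le one_pos hz2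
    exact le_of_mul_le_mul_right (by linarith [hfin]) hz2pos
  show ‖toCLM (A.conjTranspose + A)‖ = M
  rw [hHdef]
  exact le_antisymm hub hlb
end

section
/- Let n > 1 and let C_n be the (n+1)×(n+1) Crabb-Choi-Crouzeix matrix with superdiagonal entries (√2, 1, 1, ..., 1, √2) and zeros elsewhere. Then C_n^n = 2·e₁·e_{n+1}^T, and consequently ‖C_n^n‖ = 2·r(C_n^n), i.e., C_n^n is half-radial. -/
open scoped InnerProductSpace

noncomputable def CCC (n : ℕ) : Matrix (Fin (n + 1)) (Fin (n + 1)) ℂ :=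
  Matrix.of fun i j => if (i : ℕ) + 1 = (j : ℕ) then
    (if n = 1 then 2 else if (i : ℕ) = 0 ∨ (j : ℕ) = n then (Real.sqrt 2 : ℂ) else 1) else 0

namespace Aux18

noncomputable def w (n m : ℕ) : ℂ := if m = 0 ∨ m + 1 = n then (Real.sqrt 2 : ℂ) else 1

lemma CCC_apply {n : ℕ} (hn : 1 < n) (i j : Fin (n + 1)) :
    CCC n i j = if (i : ℕ) + 1 = (j : ℕ) then w n i else 0 := by
  simp only [CCC, Matrix.of_apply, w, if_neg (show n ≠ 1 by omega)]
  by_cases h : (i : ℕ) + 1 = (j : ℕ)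
  · rw [if_pos h, if_pos h, ← h]
  · rw [if_neg h, if_neg h]

lemma pow_apply {n : ℕ} (hn : 1 < n) (k : ℕ) :
    (CCC n) ^ k = Matrix.of fun i j : Fin (n + 1) =>
      if (i : ℕ) + k = (j : ℕ) then ∏ t ∈ Finset.range k, w n ((i : ℕ) + t) else 0 := by
  induction k with
  | zero =>
    ext i j
    simp [Matrix.one_apply, Fin.ext_iff, eq_comm]
  | succ k ih =>
    ext i j
    rw [pow_succ, Matrix.mul_apply]
    simp only [ih, Matrix.of_apply]
    by_cases hik : (i : ℕ) + k ≤ n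
    · rw [Finset.sum_eq_single (⟨(i : ℕ) + k, by omega⟩ : Fin (n + 1))]
      · rw [if_pos rfl, CCC_apply hn]
        by_cases hj : (i : ℕ) + k + 1 = (j : ℕ)
        · rw [if_pos hj, if_pos (by omega : (i : ℕ) + (k + 1) = (j : ℕ)),
            Finset.prod_range_succ]
        · rw [if_neg hj, if_neg (by omega : ¬((i : ℕ) + (k + 1) = (j : ℕ))), mul_zero]
      · intro l _ hl
        rw [if_neg, zero_mul]
        intro hc
        exact hl (Fin.ext hc.symm)
      · intro h; exact absurd (Finset.mem_univ _) h
    · rw [if_neg (by have := j.isLt; omega : ¬((i : ℕ) + (k + 1) = (j : ℕ)))]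
      apply Finset.sum_eq_zero
      intro l _
      rw [if_neg (by have := l.isLt; omega : ¬((i : ℕ) + k = (l : ℕ))), zero_mul]

lemma prod_w {n : ℕ} (hn : 1 < n) : ∏ t ∈ Finset.range n, w n t = 2 := by
  have h : (Finset.range n).filter (fun t => t = 0 ∨ t + 1 = n) = {0, n - 1} := by
    ext t
    simp only [Finset.mem_filter, Finset.mem_range, Finset.mem_insert, Finset.mem_singleton]
    omega
  simp only [w]
  rw [Finset.prod_ite, h, Finset.prod_const_one, mul_one, Finset.prod_const,
    Finset.card_insert_of_notMem (by simp; omega), Finset.card_singleton,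
    ← Complex.ofReal_pow, Real.sq_sqrt (by norm_num)]
  norm_num

lemma part1 {n : ℕ} (hn : 1 < n) :
    CCC n ^ n = Matrix.single (0 : Fin (n + 1)) (Fin.last n) (2 : ℂ) := by
  rw [pow_apply hn n]
  ext i j
  simp only [Matrix.of_apply, Matrix.single]
  by_cases h : (i : ℕ) + n = (j : ℕ)
  · have hi : (0 : Fin (n + 1)) = i := Fin.ext (by have := j.isLt; simp; omega)
    have hj : Fin.last n = j := Fin.ext (by have := j.isLt; simp [Fin.last]; omega)
    rw [if_pos h, if_pos ⟨hi, hj⟩]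
    have h0 : (i : ℕ) = 0 := by rw [← hi]; rfl
    simp only [h0, zero_add]
    exact prod_w hn
  · rw [if_neg h, if_neg]
    rintro ⟨hi, hj⟩
    apply h
    rw [← hi, ← hj]
    simp [Fin.last]

lemma part2 {n : ℕ} (hn : 0 < n) :
    opNorm (Matrix.single (0 : Fin (n + 1)) (Fin.last n) (2 : ℂ)) =
      2 * numRadius (Matrix.single (0 : Fin (n + 1)) (Fin.last n) (2 : ℂ)) := by
  set M := Matrix.single (0 : Fin (n + 1)) (Fin.last n) (2 : ℂ) with hM
  have hlast : (0 : Fin (n + 1)) ≠ Fin.last n := by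
    simp [Fin.ext_iff, Fin.last]; omega
  -- action of the CLM
  have hT : ∀ z : EuclideanSpace ℂ (Fin (n + 1)),
      toCLM M z = (2 * z (Fin.last n)) • EuclideanSpace.single (0 : Fin (n + 1)) (1 : ℂ) := by
    intro z
    refine PiLp.ext fun i => ?_
    have h := congrFun (Matrix.ofLp_toEuclideanCLM (𝕜 := ℂ) M z) i
    rw [toCLM] at *
    rw [h, hM, Matrix.single_mulVec]
    simp only [PiLp.smul_apply, EuclideanSpace.single_apply, smul_eq_mul]
    rcases eq_or_ne i 0 with rfl | hi
    · simp [Function.update]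
    · simp [Function.update, hi, Ne.symm hi]
  -- inner product formula
  have hinner : ∀ z : EuclideanSpace ℂ (Fin (n + 1)),
      ⟪z, toCLM M z⟫_ℂ = (2 * z (Fin.last n)) * (starRingEnd ℂ) (z 0) := by
    intro z
    rw [hT z, inner_smul_right, EuclideanSpace.inner_single_right]
    ring
  -- numerical radius = 1
  have hrad : numRadius M = 1 := by
    have hub : ∀ r ∈ {r : ℝ | ∃ z : EuclideanSpace ℂ (Fin (n + 1)),
        ‖z‖ = 1 ∧ r = ‖⟪z, toCLM M z⟫_ℂ‖}, r ≤ 1 := by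
      rintro r ⟨z, hz, rfl⟩
      rw [hinner z]
      have hsum : ‖z 0‖ ^ 2 + ‖z (Fin.last n)‖ ^ 2 ≤ 1 := by
        have h1 : ‖z‖ ^ 2 = ∑ i, ‖z i‖ ^ 2 := by
          rw [EuclideanSpace.norm_eq, Real.sq_sqrt (Finset.sum_nonneg fun _ _ => sq_nonneg _)]
        have h2 : ∑ i ∈ ({0, Fin.last n} : Finset (Fin (n + 1))), ‖z i‖ ^ 2 ≤
            ∑ i, ‖z i‖ ^ 2 :=
          Finset.sum_le_sum_of_subset_of_nonneg (Finset.subset_univ _)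
            (fun _ _ _ => sq_nonneg _)
        rw [Finset.sum_pair hlast] at h2
        rw [hz] at h1
        simpa using h2.trans_eq h1.symm
      have habs : ‖(2 * z (Fin.last n)) * (starRingEnd ℂ) (z 0)‖ =
          2 * (‖z (Fin.last n)‖ * ‖z 0‖) := by
        rw [norm_mul, norm_mul, Complex.norm_conj, Complex.norm_two, mul_assoc]
      rw [habs]
      nlinarith [two_mul_le_add_sq ‖z (Fin.last n)‖ ‖z 0‖, norm_nonneg (z 0),
        norm_nonneg (z (Fin.last n))]
    have hmem : (1 : ℝ) ∈ {r : ℝ | ∃ z : EuclideanSpace ℂ (Fin (n + 1)),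
        ‖z‖ = 1 ∧ r = ‖⟪z, toCLM M z⟫_ℂ‖} := by
      refine ⟨(WithLp.equiv 2 _).symm
        (fun i => if i = 0 ∨ i = Fin.last n then ((Real.sqrt 2 / 2 : ℝ) : ℂ) else 0), ?_, ?_⟩
      · rw [EuclideanSpace.norm_eq]
        have : ∀ i : Fin (n + 1),
            ‖(WithLp.equiv 2 _).symm
              (fun i => if i = 0 ∨ i = Fin.last n then ((Real.sqrt 2 / 2 : ℝ) : ℂ) else 0) i‖ ^ 2
            = (if i = 0 then (1 / 2 : ℝ) else 0) + (if i = Fin.last n then (1 / 2 : ℝ) else 0) := by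
          intro i
          rw [show ∀ (f : Fin (n + 1) → ℂ) (j : Fin (n + 1)), (WithLp.equiv 2 (Fin (n + 1) → ℂ)).symm f j = f j from fun _ _ => rfl]
          have hs : ‖(((Real.sqrt 2 / 2 : ℝ)) : ℂ)‖ ^ 2 = 1 / 2 := by
            rw [Complex.norm_real, Real.norm_eq_abs, abs_of_nonneg (by positivity), div_pow,
              Real.sq_sqrt] <;> norm_num
          rcases eq_or_ne i 0 with rfl | hi
          · rw [if_pos (Or.inl rfl), if_pos rfl, if_neg hlast, hs]
            norm_num
          · rcases eq_or_ne i (Fin.last n) with rfl | hil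
            · rw [if_pos (Or.inr rfl), if_neg hi, if_pos rfl, hs]
              norm_num
            · rw [if_neg (by tauto), if_neg hi, if_neg hil]
              norm_num
        simp_rw [this]
        rw [Finset.sum_add_distrib, Finset.sum_ite_eq' Finset.univ (0 : Fin (n + 1)),
          Finset.sum_ite_eq' Finset.univ (Fin.last n)]
        simp; norm_num
      · rw [hinner]
        rw [show ∀ (f : Fin (n + 1) → ℂ) (j : Fin (n + 1)), (WithLp.equiv 2 (Fin (n + 1) → ℂ)).symm f j = f j from fun _ _ => rfl]
        rw [show ∀ (f : Fin (n + 1) → ℂ) (j : Fin (n + 1)), (WithLp.equiv 2 (Fin (n + 1) → ℂ)).symm f j = f j from fun _ _ => rfl]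
        simp only [eq_self_iff_true, true_or, or_true, if_true]
        rw [Complex.conj_ofReal]
        have : (2 : ℂ) * ((Real.sqrt 2 / 2 : ℝ) : ℂ) * ((Real.sqrt 2 / 2 : ℝ) : ℂ)
            = ((Real.sqrt 2 * Real.sqrt 2 / 2 : ℝ) : ℂ) := by push_cast; ring
        rw [this, Real.mul_self_sqrt (by norm_num)]
        norm_num
    refine le_antisymm (csSup_le ⟨1, hmem⟩ hub) (le_csSup ⟨1, hub⟩ hmem)
  -- operator norm = 2
  have hnorm : opNorm M = 2 := by
    have hg : toCLM M =
        (innerSL ℂ (EuclideanSpace.single (Fin.last n) (1 : ℂ))).smulRight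
          (EuclideanSpace.single (0 : Fin (n + 1)) (2 : ℂ)) := by
      ext z i
      rw [hT z]
      simp only [ContinuousLinearMap.smulRight_apply, EuclideanSpace.inner_single_left,
        map_one, one_mul, PiLp.smul_apply, EuclideanSpace.single_apply, smul_eq_mul]
      rcases eq_or_ne i 0 with rfl | hi
      · simp [mul_comm, EuclideanSpace.inner_single_left]
      · simp [hi]
    rw [opNorm, hg, ContinuousLinearMap.norm_smulRight_apply, innerSL_apply_norm,
      EuclideanSpace.norm_single, EuclideanSpace.norm_single]
    simp
  rw [hnorm, hrad]
  norm_num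

end Aux18

theorem stmt18 {n : ℕ} (hn : 1 < n) :
    CCC n ^ n = Matrix.single (0 : Fin (n + 1)) (Fin.last n) (2 : ℂ) ∧
    opNorm (CCC n ^ n) = 2 * numRadius (CCC n ^ n) := by
  have h1 := Aux18.part1 hn
  exact ⟨h1, by rw [h1]; exact Aux18.part2 (by omega)⟩
end

section
/- Let A ∈ ℂ^{(n+1)×(n+1)} be nonzero and 1 ≤ k ≤ n. If A is unitarily similar to r(A)·(C_k ⊕ B) where C_k is the Crabb-Choi-Crouzeix matrix, r(B) ≤ 1, and ‖B^k‖ ≤ 2, then ‖A^k‖ = 2·sup_{ζ ∈ W(A)} |ζ^k| = 2·r(A)^k. -/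
open scoped InnerProductSpace

section Aux

open Matrix
open scoped Matrix.Norms.L2Operator

-- the sqrt2 * sqrt2 = 2 fact in ℂ
lemma sqrt2_mul_sqrt2 : (Real.sqrt 2 : ℂ) * (Real.sqrt 2 : ℂ) = 2 := by
  rw [← Complex.ofReal_mul, Real.mul_self_sqrt (by norm_num)]
  norm_num

/-- entries of powers of the CCC matrix -/
lemma CCC_pow_apply (k : ℕ) (hk : 1 ≤ k) :
    ∀ m, 1 ≤ m → m ≤ k → ∀ i j : Fin (k + 1), ((CCC k) ^ m) i j =
      if (i : ℕ) + m = (j : ℕ) then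
        (if (i : ℕ) = 0 then (Real.sqrt 2 : ℂ) else 1) *
        (if (j : ℕ) = k then (Real.sqrt 2 : ℂ) else 1)
      else 0 := by
  intro m
  induction m with
  | zero => omega
  | succ m ih =>
    intro _ hmk i j
    rcases Nat.eq_zero_or_pos m with hm0 | hm0
    · subst hm0
      rw [pow_one]
      have hi : (i : ℕ) < k + 1 := i.isLt
      have hj : (j : ℕ) < k + 1 := j.isLt
      by_cases hij : (i : ℕ) + 1 = (j : ℕ)
      · simp only [CCC, of_apply, hij, if_true]
        by_cases hk1 : k = 1
        · subst hk1
          have hi0 : (i : ℕ) = 0 := by omega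
          have hj1 : (j : ℕ) = 1 := by omega
          simp [hi0, hj1, sqrt2_mul_sqrt2]
        · by_cases hi0 : (i : ℕ) = 0
          · have hjk : (j : ℕ) ≠ k := by omega
            simp [hk1, hi0, hjk]
          · by_cases hjk : (j : ℕ) = k
            · simp [hk1, hi0, hjk]
            · simp [hk1, hi0, hjk]
      · simp [CCC, hij]
    · have hmk' : m ≤ k := by omega
      rw [pow_succ, Matrix.mul_apply]
      by_cases hij : (i : ℕ) + (m + 1) = (j : ℕ)
      · rw [if_pos hij]
        have hjk : (j : ℕ) ≤ k := by omega
        have hl : (i : ℕ) + m < k + 1 := by omega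
        set l₀ : Fin (k + 1) := ⟨(i : ℕ) + m, hl⟩ with hl₀
        have hval : (l₀ : ℕ) = (i : ℕ) + m := rfl
        rw [Finset.sum_eq_single l₀]
        · rw [ih hm0 hmk' i l₀]
          rw [if_pos hval.symm]
          have hlk : (l₀ : ℕ) ≠ k := by omega
          have hl0 : (l₀ : ℕ) ≠ 0 := by omega
          have hCl : CCC k l₀ j = if (j : ℕ) = k then (Real.sqrt 2 : ℂ) else 1 := by
            have h2 : (l₀ : ℕ) + 1 = (j : ℕ) := by omega
            have hk1 : k ≠ 1 := by omega
            have hl0' : l₀ ≠ 0 := fun h => hl0 (by simp [h])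
            simp [CCC, h2, hk1, hl0, hl0']
          rw [hCl, if_neg hlk, mul_one]
        · intro l _ hll
          rw [ih hm0 hmk' i l]
          have hne : (i : ℕ) + m ≠ (l : ℕ) := by
            intro h
            exact hll (Fin.ext (by omega))
          rw [if_neg hne, zero_mul]
        · intro h
          exact absurd (Finset.mem_univ l₀) h
      · rw [if_neg hij]
        apply Finset.sum_eq_zero
        intro l _
        rw [ih hm0 hmk' i l]
        by_cases hil : (i : ℕ) + m = (l : ℕ)
        · have hne : (l : ℕ) + 1 ≠ (j : ℕ) := by omega
          simp [CCC, hne]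
        · simp [hil]

lemma CCC_pow_k (k : ℕ) (hk : 1 ≤ k) :
    (CCC k) ^ k = Matrix.of fun i j : Fin (k + 1) =>
      if (i : ℕ) = 0 ∧ (j : ℕ) = k then (2 : ℂ) else 0 := by
  ext i j
  rw [CCC_pow_apply k hk k hk le_rfl i j]
  have hj : (j : ℕ) < k + 1 := j.isLt
  by_cases h : (i : ℕ) + k = (j : ℕ)
  · have hi0 : (i : ℕ) = 0 := by omega
    have hjk : (j : ℕ) = k := by omega
    simp [h, hi0, hjk, sqrt2_mul_sqrt2]
    simpa using hi0
  · have : ¬((i : ℕ) = 0 ∧ (j : ℕ) = k) := by omega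
    simp [h, this]
    exact fun h1 h2 => this ⟨by simp [h1], h2⟩

lemma fromBlocks_diag_pow {l m : Type*} [Fintype l] [Fintype m] [DecidableEq l] [DecidableEq m]
    (X : Matrix l l ℂ) (Y : Matrix m m ℂ) (t : ℕ) :
    (Matrix.fromBlocks X 0 0 Y) ^ t = Matrix.fromBlocks (X ^ t) 0 0 (Y ^ t) := by
  induction t with
  | zero => simp [Matrix.fromBlocks_one]
  | succ t ih =>
    rw [pow_succ, ih, Matrix.fromBlocks_multiply, pow_succ, pow_succ]
    simp

lemma conj_pow_unitary {N : Type*} [Fintype N] [DecidableEq N]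
    (Q X : Matrix N N ℂ) (hQ : Q ∈ Matrix.unitaryGroup N ℂ) (t : ℕ) :
    (Q * X * star Q) ^ t = Q * X ^ t * star Q := by
  have h1 : star Q * Q = 1 := Matrix.mem_unitaryGroup_iff'.mp hQ
  have h2 : Q * star Q = 1 := Matrix.mem_unitaryGroup_iff.mp hQ
  induction t with
  | zero => simp [h2]
  | succ t ih =>
    rw [pow_succ, ih, pow_succ]
    simp only [mul_assoc]
    rw [← mul_assoc (star Q) Q, h1, one_mul]

lemma reindex_pow {N M : Type*} [Fintype N] [DecidableEq N] [Fintype M] [DecidableEq M]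
    (f : N ≃ M) (X : Matrix M M ℂ) (t : ℕ) :
    (Matrix.reindex f.symm f.symm X) ^ t = Matrix.reindex f.symm f.symm (X ^ t) := by
  induction t with
  | zero => simp
  | succ t ih =>
    rw [pow_succ, ih, pow_succ]
    simp only [Matrix.reindex_apply, Equiv.symm_symm]
    rw [Matrix.submatrix_mul_equiv]

/-- sSup of the k-th powers of a set of nonnegative reals -/
lemma sSup_pow_set {S : Set ℝ} (hne : S.Nonempty) (hbdd : BddAbove S)
    (hpos : ∀ s ∈ S, 0 ≤ s) (k : ℕ) :
    sSup ((fun s : ℝ => s ^ k) '' S) = (sSup S) ^ k := by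
  set f : ℝ → ℝ := fun t => (max t 0) ^ k with hf
  have hmono : Monotone f := fun a b hab =>
    pow_le_pow_left₀ (le_max_right _ _) (max_le_max hab le_rfl) _
  have hcont : ContinuousAt f (sSup S) :=
    (((continuous_id.max continuous_const).pow k)).continuousAt
  have key := hmono.map_csSup_of_continuousAt hcont hne hbdd
  have himg : f '' S = (fun s : ℝ => s ^ k) '' S := by
    apply Set.image_congr
    intro s hs
    simp [hf, max_eq_left (hpos s hs)]
  have hsup_nonneg : 0 ≤ sSup S := by
    obtain ⟨s, hs⟩ := hne
    exact le_trans (hpos s hs) (le_csSup hbdd hs)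
  rw [himg] at key
  rw [← key, hf]
  simp [max_eq_left hsup_nonneg]

end Aux

section Key

open Matrix
open scoped Matrix.Norms.L2Operator

variable {k p N : ℕ}

/-- the single-entry top block -/
noncomputable def Cblk (k : ℕ) : Matrix (Fin (k + 1)) (Fin (k + 1)) ℂ :=
  Matrix.of fun i j : Fin (k + 1) => if (i : ℕ) = 0 ∧ (j : ℕ) = k then (2 : ℂ) else 0

lemma Cblk_mulVec (k : ℕ) (x : Fin (k + 1) → ℂ) :
    (Cblk k) *ᵥ x = fun a : Fin (k + 1) => if (a : ℕ) = 0 then 2 * x (Fin.last k) else 0 := by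
  funext a
  show ∑ j, (Cblk k) a j * x j = _
  rw [Finset.sum_eq_single (Fin.last k)]
  · by_cases ha : (a : ℕ) = 0 <;> simp [Cblk, ha, Fin.val_last] <;> simp_all
  · intro b _ hb
    have : (b : ℕ) ≠ k := fun h => hb (Fin.ext (by simp [Fin.val_last, h]))
    simp [Cblk, this]
  · intro h
    exact absurd (Finset.mem_univ _) h

lemma sq_sum_key (B' : Matrix (Fin p) (Fin p) ℂ) (e : Fin N ≃ Fin (k + 1) ⊕ Fin p)
    (v : Fin N → ℂ) :
    ∑ i, ‖((Matrix.reindex e.symm e.symm (Matrix.fromBlocks (Cblk k) 0 0 B')) *ᵥ v) i‖ ^ 2 =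
      4 * ‖v (e.symm (Sum.inl (Fin.last k)))‖ ^ 2 +
        ∑ b, ‖(B' *ᵥ (fun b => v (e.symm (Sum.inr b)))) b‖ ^ 2 := by
  set W := Matrix.fromBlocks (Cblk k) 0 0 B' with hW
  have h1 : (Matrix.reindex e.symm e.symm W) *ᵥ v = (W *ᵥ (v ∘ e.symm)) ∘ e := by
    rw [Matrix.reindex_apply]
    simp only [Equiv.symm_symm]
    exact Matrix.submatrix_mulVec_equiv W v e e
  have h1' : ∀ i, ((Matrix.reindex e.symm e.symm W) *ᵥ v) i = (W *ᵥ (v ∘ e.symm)) (e i) := by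
    intro i; rw [h1]; rfl
  rw [show (∑ i, ‖((Matrix.reindex e.symm e.symm W) *ᵥ v) i‖ ^ 2)
      = ∑ i, ‖(W *ᵥ (v ∘ e.symm)) (e i)‖ ^ 2 from
    Finset.sum_congr rfl fun i _ => by rw [h1']]
  rw [Equiv.sum_comp e (fun s => ‖(W *ᵥ (v ∘ e.symm)) s‖ ^ 2)]
  have h2 : v ∘ e.symm = Sum.elim (fun a => v (e.symm (Sum.inl a))) (fun b => v (e.symm (Sum.inr b))) := by
    funext s; cases s <;> rfl
  rw [h2, hW, Matrix.fromBlocks_mulVec]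
  simp only [Matrix.zero_mulVec, add_zero, zero_add]
  rw [Fintype.sum_sum_type]
  congr 1
  · rw [Cblk_mulVec]
    simp only [Sum.elim_inl]
    have h3 : ∀ a : Fin (k + 1),
        ‖if (a : ℕ) = 0 then 2 * v (e.symm (Sum.inl (Fin.last k))) else 0‖ ^ 2 =
        if a = (0 : Fin (k + 1)) then 4 * ‖v (e.symm (Sum.inl (Fin.last k)))‖ ^ 2 else 0 := by
      intro a
      by_cases ha : (a : ℕ) = 0
      · have ha' : a = 0 := Fin.ext (by simpa using ha)
        simp [ha, ha', norm_mul, mul_pow]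
        norm_num
      · have ha' : a ≠ 0 := fun h => ha (by simp [h])
        simp [ha, ha']
    simp only [Function.comp_apply, Sum.elim_inl]
    simp only [h3]
    simp

lemma key_norm (B' : Matrix (Fin p) (Fin p) ℂ) (hB : ‖B'‖ ≤ 2)
    (e : Fin N ≃ Fin (k + 1) ⊕ Fin p) :
    ‖(Matrix.reindex e.symm e.symm (Matrix.fromBlocks (Cblk k) 0 0 B') :
        Matrix (Fin N) (Fin N) ℂ)‖ = 2 := by
  set M := Matrix.reindex e.symm e.symm (Matrix.fromBlocks (Cblk k) 0 0 B') with hM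
  have hcoord : ∀ (v : EuclideanSpace ℂ (Fin N)) (i : Fin N),
      (Matrix.toEuclideanCLM (𝕜 := ℂ) M v) i = (M *ᵥ v) i := fun _ _ => rfl
  have hnorm : ∀ v : EuclideanSpace ℂ (Fin N),
      ‖Matrix.toEuclideanCLM (𝕜 := ℂ) M v‖ = Real.sqrt (∑ i, ‖(M *ᵥ v) i‖ ^ 2) := by
    intro v
    rw [EuclideanSpace.norm_eq]
    congr 1
  apply le_antisymm
  · rw [Matrix.cstar_norm_def]
    apply ContinuousLinearMap.opNorm_le_bound _ (by norm_num)
    intro v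
    rw [hnorm v, sq_sum_key B' e v]
    set yE : EuclideanSpace ℂ (Fin p) := WithLp.toLp 2 (fun b => v (e.symm (Sum.inr b))) with hyE
    have hy : ∑ b, ‖(B' *ᵥ (fun b => v (e.symm (Sum.inr b)))) b‖ ^ 2 ≤ 4 * ∑ b, ‖yE b‖ ^ 2 := by
      have h4 : ‖(EuclideanSpace.equiv (Fin p) ℂ).symm (B' *ᵥ yE)‖ ≤ ‖B'‖ * ‖yE‖ :=
        Matrix.l2_opNorm_mulVec B' yE
      have h5 : ‖(EuclideanSpace.equiv (Fin p) ℂ).symm (B' *ᵥ yE)‖ ^ 2 =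
          ∑ b, ‖(B' *ᵥ (fun b => v (e.symm (Sum.inr b)))) b‖ ^ 2 := by
        rw [EuclideanSpace.norm_eq, Real.sq_sqrt (by positivity)]
        rfl
      have h6 : ‖yE‖ ^ 2 = ∑ b, ‖yE b‖ ^ 2 := by
        rw [EuclideanSpace.norm_eq, Real.sq_sqrt (by positivity)]
      calc ∑ b, ‖(B' *ᵥ (fun b => v (e.symm (Sum.inr b)))) b‖ ^ 2
          = ‖(EuclideanSpace.equiv (Fin p) ℂ).symm (B' *ᵥ yE)‖ ^ 2 := h5.symm
        _ ≤ (‖B'‖ * ‖yE‖) ^ 2 := by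
            apply pow_le_pow_left₀ (norm_nonneg _) h4
        _ ≤ (2 * ‖yE‖) ^ 2 := by
            apply pow_le_pow_left₀ (by positivity)
            exact mul_le_mul_of_nonneg_right hB (norm_nonneg _)
        _ = 4 * ‖yE‖ ^ 2 := by ring
        _ = 4 * ∑ b, ‖yE b‖ ^ 2 := by rw [h6]
    have hvsq : ‖v‖ ^ 2 = ∑ i, ‖v i‖ ^ 2 := by
      rw [EuclideanSpace.norm_eq, Real.sq_sqrt (by positivity)]
    have hsplit : ∑ i, ‖v i‖ ^ 2 =
        (∑ a, ‖v (e.symm (Sum.inl a))‖ ^ 2) + ∑ b, ‖v (e.symm (Sum.inr b))‖ ^ 2 := by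
      rw [← Equiv.sum_comp e.symm (fun i => ‖v i‖ ^ 2), Fintype.sum_sum_type]
    have hsingle : ‖v (e.symm (Sum.inl (Fin.last k)))‖ ^ 2 ≤ ∑ a, ‖v (e.symm (Sum.inl a))‖ ^ 2 :=
      Finset.single_le_sum (f := fun a => ‖v (e.symm (Sum.inl a))‖ ^ 2)
        (fun a _ => by positivity) (Finset.mem_univ _)
    have hbound : 4 * ‖v (e.symm (Sum.inl (Fin.last k)))‖ ^ 2 +
        ∑ b, ‖(B' *ᵥ (fun b => v (e.symm (Sum.inr b)))) b‖ ^ 2 ≤ (2 * ‖v‖) ^ 2 := by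
      have : (2 * ‖v‖) ^ 2 = 4 * ‖v‖ ^ 2 := by ring
      rw [this, hvsq, hsplit]
      have := hy
      simp only [hyE] at this
      nlinarith [hsingle]
    calc Real.sqrt (4 * ‖v (e.symm (Sum.inl (Fin.last k)))‖ ^ 2 +
          ∑ b, ‖(B' *ᵥ (fun b => v (e.symm (Sum.inr b)))) b‖ ^ 2)
        ≤ Real.sqrt ((2 * ‖v‖) ^ 2) := Real.sqrt_le_sqrt hbound
      _ = 2 * ‖v‖ := Real.sqrt_sq (by positivity)
  · set v₀ : EuclideanSpace ℂ (Fin N) :=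
      EuclideanSpace.single (e.symm (Sum.inl (Fin.last k))) (1 : ℂ) with hv₀
    have hv₀norm : ‖v₀‖ = 1 := by
      rw [hv₀, EuclideanSpace.norm_single]; norm_num
    have happ : ‖Matrix.toEuclideanCLM (𝕜 := ℂ) M v₀‖ = 2 := by
      rw [hnorm v₀, sq_sum_key B' e v₀]
      have hx : v₀ (e.symm (Sum.inl (Fin.last k))) = 1 := by
        rw [hv₀, EuclideanSpace.single_apply, if_pos rfl]
      have hyzero : (fun b => v₀ (e.symm (Sum.inr b))) = 0 := by
        funext b
        rw [hv₀, EuclideanSpace.single_apply, if_neg, Pi.zero_apply]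
        intro h
        exact Sum.inr_ne_inl (e.symm.injective h)
      rw [hx, hyzero, Matrix.mulVec_zero]
      have h4 : Real.sqrt 4 = 2 := by
        rw [show (4 : ℝ) = 2 ^ 2 by norm_num, Real.sqrt_sq (by norm_num)]
      simpa using h4
    have hle := (Matrix.toEuclideanCLM (𝕜 := ℂ) M).le_opNorm v₀
    rw [happ, hv₀norm, mul_one] at hle
    exact hle

end Key

section MainThm

open Matrix
open scoped Matrix.Norms.L2Operator

set_option synthInstance.maxHeartbeats 1000000 in
lemma numRadius_bddAbove {N : ℕ} (A : Matrix (Fin N) (Fin N) ℂ) :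
    BddAbove {r : ℝ | ∃ z : EuclideanSpace ℂ (Fin N), ‖z‖ = 1 ∧
      r = ‖⟪z, toCLM A z⟫_ℂ‖} := by
  refine ⟨opNorm A, ?_⟩
  rintro r ⟨z, hz, rfl⟩
  calc ‖⟪z, toCLM A z⟫_ℂ‖ ≤ ‖z‖ * ‖toCLM A z‖ := norm_inner_le_norm _ _
    _ ≤ ‖z‖ * (‖toCLM A‖ * ‖z‖) :=
        mul_le_mul_of_nonneg_left ((toCLM A).le_opNorm z) (norm_nonneg z)
    _ = opNorm A := by rw [hz]; simp [opNorm]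

lemma numRadius_set_nonempty {n : ℕ} (A : Matrix (Fin (n + 1)) (Fin (n + 1)) ℂ) :
    Set.Nonempty {r : ℝ | ∃ z : EuclideanSpace ℂ (Fin (n + 1)), ‖z‖ = 1 ∧
      r = ‖⟪z, toCLM A z⟫_ℂ‖} := by
  refine ⟨‖⟪(EuclideanSpace.single 0 1 : EuclideanSpace ℂ (Fin (n + 1))),
    toCLM A (EuclideanSpace.single 0 1)⟫_ℂ‖, EuclideanSpace.single 0 1, ?_, rfl⟩
  rw [EuclideanSpace.norm_single]
  norm_num

lemma real_smul_matrix {N : ℕ} (c : ℝ) (X : Matrix (Fin N) (Fin N) ℂ) :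
    c • X = ((c : ℂ)) • X := by
  ext i j
  simp [Matrix.smul_apply, Complex.real_smul]

end MainThm

open Matrix in
open scoped Matrix.Norms.L2Operator in
theorem stmt19 {n : ℕ} (A : Matrix (Fin (n + 1)) (Fin (n + 1)) ℂ) (hA : A ≠ 0)
    (k : ℕ) (hk1 : 1 ≤ k) (hkn : k ≤ n)
    (p : ℕ) (B : Matrix (Fin p) (Fin p) ℂ) (e : Fin (n + 1) ≃ Fin (k + 1) ⊕ Fin p)
    (Q : Matrix (Fin (n + 1)) (Fin (n + 1)) ℂ) (hQ : Q ∈ Matrix.unitaryGroup (Fin (n + 1)) ℂ)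
    (hsim : A = numRadius A •
      (Q * (Matrix.reindex e.symm e.symm (Matrix.fromBlocks (CCC k) 0 0 B)) * star Q))
    (hB1 : numRadius B ≤ 1) (hB2 : opNorm (B ^ k) ≤ 2) :
    opNorm (A ^ k) = 2 * sSup {r : ℝ | ∃ z : EuclideanSpace ℂ (Fin (n + 1)),
        ‖z‖ = 1 ∧ r = ‖⟪z, toCLM A z⟫_ℂ ^ k‖} ∧
    opNorm (A ^ k) = 2 * (numRadius A) ^ k := by
  classical
  set r := numRadius A with hr
  set S := {s : ℝ | ∃ z : EuclideanSpace ℂ (Fin (n + 1)), ‖z‖ = 1 ∧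
      s = ‖⟪z, toCLM A z⟫_ℂ‖} with hS
  have hSne : S.Nonempty := numRadius_set_nonempty A
  have hSbdd : BddAbove S := numRadius_bddAbove A
  have hSpos : ∀ s ∈ S, 0 ≤ s := by
    rintro s ⟨z, hz, rfl⟩
    exact norm_nonneg _
  have hr0 : 0 ≤ r := by
    obtain ⟨s, hs⟩ := hSne
    exact le_trans (hSpos s hs) (le_csSup hSbdd hs)
  -- the power of A
  have hApow : A ^ k = ((r ^ k : ℝ) : ℂ) •
      (Q * (Matrix.reindex e.symm e.symm (Matrix.fromBlocks (Cblk k) 0 0 (B ^ k))) * star Q) := by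
    rw [hsim, smul_pow, conj_pow_unitary _ _ hQ, reindex_pow, fromBlocks_diag_pow,
      CCC_pow_k k hk1, real_smul_matrix]
    rfl
  -- norm computation
  have hBnorm : ‖B ^ k‖ ≤ 2 := hB2
  have hconj : ∀ X : Matrix (Fin (n + 1)) (Fin (n + 1)) ℂ, ‖Q * X * star Q‖ = ‖X‖ := by
    intro X
    rw [CStarRing.norm_mul_mem_unitary _ (Unitary.star_mem hQ)]
    exact CStarRing.norm_mem_unitary_mul _ hQ
  have hmain : opNorm (A ^ k) = 2 * r ^ k := by
    show ‖A ^ k‖ = 2 * r ^ k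
    rw [hApow, norm_smul, hconj, key_norm (B ^ k) hBnorm e]
    rw [Complex.norm_real, Real.norm_eq_abs, abs_of_nonneg (pow_nonneg hr0 k)]
    ring
  refine ⟨?_, hmain⟩
  rw [hmain]
  congr 1
  have hTS : {t : ℝ | ∃ z : EuclideanSpace ℂ (Fin (n + 1)),
      ‖z‖ = 1 ∧ t = ‖⟪z, toCLM A z⟫_ℂ ^ k‖} = (fun s : ℝ => s ^ k) '' S := by
    ext t
    constructor
    · rintro ⟨z, hz, rfl⟩
      exact ⟨‖⟪z, toCLM A z⟫_ℂ‖, ⟨z, hz, rfl⟩, by rw [norm_pow]⟩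
    · rintro ⟨s, ⟨z, hz, rfl⟩, rfl⟩
      exact ⟨z, hz, by rw [norm_pow]⟩
  rw [hTS, sSup_pow_set hSne hSbdd hSpos k]
  rfl
end
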